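/- arXiv:1307.5528 — 13 statements merged into one kernel-verified Lean document; each statement's English description precedes it below -/
import Mathlib

section
/- Let p and q be projections in a *-ring. If pq is Moore-Penrose invertible, then pqp is Moore-Penrose invertible with (pqp)† = ((pq)†)*(pq)†, and pqp(pqp)†pq = pq. -/
variable {R : Type*} [Ring R] [StarRing R]

/-- `b` is a Moore-Penrose inverse of `a`. -/
def IsMP (a b : R) : Prop :=
  a * b * a = a ∧ b * a * b = b ∧ star (a * b) = a * b ∧ star (b * a) = b * a

/-- `p` is a projection: self-adjoint idempotent. -/
def IsProj (p : R) : Prop := p * p = p ∧ star p = p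

/-- The right ideal `aR`. -/
def rid (a : R) : Set R := {x | ∃ r, x = a * r}

/-- Elementwise sum of two subsets. -/
def sid (A B : Set R) : Set R := {z | ∃ x ∈ A, ∃ y ∈ B, z = x + y}

theorem stmt6 (p q c : R) (hp : IsProj p) (hq : IsProj q)
    (hc : IsMP (p * q) c) :
    IsMP (p * q * p) (star c * c) ∧
    (p * q * p) * (star c * c) * (p * q) = p * q := by
  obtain ⟨h1, h2, h3, h4⟩ := hc
  simp only [mul_assoc] at h1 h2 h3 h4
  -- h1 : p*(q*(c*(p*q))) = p*q
  -- h2 : c*(p*(q*c)) = c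
  -- h3 : star (p*(q*c)) = p*(q*c)
  -- h4 : star (c*(p*q)) = c*(p*q)
  have e0 : c * (p * q) = q * (p * star c) := by
    conv_lhs => rw [← h4]
    simp only [star_mul, hp.2, hq.2, mul_assoc]
  have e0' : ∀ x : R, c * (p * (q * x)) = q * (p * (star c * x)) := fun x => by
    simpa [mul_assoc] using congrArg (· * x) e0
  have hqc : q * c = c := by
    conv_lhs => rw [← h2, e0' c, ← mul_assoc, hq.1]
    rw [← e0' c, h2]
  have e1 : p * (q * c) = star c * (q * p) := by
    conv_lhs => rw [← h3]
    simp only [star_mul, hp.2, hq.2, mul_assoc]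
  have hcp : c * p = c := by
    conv_lhs => rw [← h2, e1]
    simp only [mul_assoc]
    rw [hp.1, ← e1, h2]
  have hcc : c * c = c := by
    nth_rewrite 2 [← hqc]
    nth_rewrite 1 [← hcp]
    simp only [mul_assoc]
    exact h2
  have hpsc : p * star c = star c := by
    rw [← hp.2, ← star_mul, hcp]
  have hcq : c * q = c * (p * q) := by rw [← mul_assoc, hcp]
  have hqsc : q * star c = c * (p * q) := by
    have hst : star (c * q) = q * star c := by rw [star_mul, hq.2]
    rw [← hst, hcq, h4]
  -- applied (right-associated) forms
  have e_h1 : ∀ x : R, p * (q * (c * (p * (q * x)))) = p * (q * x) := fun x => by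
    simpa [mul_assoc] using congrArg (· * x) h1
  have e_h2 : ∀ x : R, c * (p * (q * (c * x))) = c * x := fun x => by
    simpa [mul_assoc] using congrArg (· * x) h2
  have e_hcp : ∀ x : R, c * (p * x) = c * x := fun x => by
    simpa [mul_assoc] using congrArg (· * x) hcp
  have e_hqc : ∀ x : R, q * (c * x) = c * x := fun x => by
    simpa [mul_assoc] using congrArg (· * x) hqc
  have e_hpsc : ∀ x : R, p * (star c * x) = star c * x := fun x => by
    simpa [mul_assoc] using congrArg (· * x) hpsc
  have e_hqsc : ∀ x : R, q * (star c * x) = c * (p * (q * x)) := fun x => by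
    simpa [mul_assoc] using congrArg (· * x) hqsc
  -- x*b = p*c (applied form)
  have hxb' : ∀ x : R, p * (q * (p * (star c * (c * x)))) = p * (c * x) := fun x => by
    rw [e_hpsc (c * x), e_hqsc (c * x), e_h2 x]
  have hxb : p * (q * (p * (star c * c))) = p * c := by
    rw [← mul_assoc p (star c) c, hpsc, ← mul_assoc q (star c) c, hqsc]
    simp only [mul_assoc]
    rw [h2]
  have hpcs : star (p * c) = p * c := by
    rw [← hqc]; exact h3
  have hbx : star c * (c * (p * (q * p))) = p * c := by
    have hstar : star (p * (q * (p * (star c * c)))) = star c * (c * (p * (q * p))) := by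
      simp only [star_mul, star_star, hp.2, hq.2, mul_assoc]
    rw [← hstar, hxb, hpcs]
  refine ⟨⟨?_, ?_, ?_, ?_⟩, ?_⟩ <;> simp only [mul_assoc]
  · -- x*b*x = x
    rw [hxb' (p * (q * p)), e_hcp (q * p), ← e_hqc (q * p), ← e_hcp (q * p), e_h1 p]
  · -- b*x*b = b
    rw [hxb, e_hcp c, hcc]
  · -- star (x*b) = x*b
    rw [hxb, hpcs]
  · -- star (b*x) = b*x
    rw [hbx, hpcs]
  · -- x*b*(p*q) = p*q
    rw [hxb' (p * q), e_hcp q, ← e_hqc q, ← e_hcp q, h1]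
end

section
/- Let p and q be projections in a *-ring with (1-p)q Moore-Penrose invertible. Then ((1-p)q)† = q((1-p)q(1-p))†. -/
variable {R : Type*} [Ring R] [StarRing R]

private lemma mp_unique (a b b' : R) (h : IsMP a b) (h' : IsMP a b') : b = b' := by
  obtain ⟨h1, h2, h3, h4⟩ := h
  obtain ⟨h1', h2', h3', h4'⟩ := h'
  have key1 : b = b * a * b' := by
    calc b = b * a * b := h2.symm
      _ = b * star (a * b) := by rw [h3]; noncomm_ring
      _ = b * (star b * star a) := by rw [star_mul]
      _ = b * (star b * star (a * b' * a)) := by rw [h1']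
      _ = b * (star b * (star a * (a * b'))) := by rw [star_mul, h3']
      _ = (b * star (a * b)) * (a * b') := by rw [star_mul]; noncomm_ring
      _ = (b * (a * b)) * (a * b') := by rw [h3]
      _ = (b * a * b) * (a * b') := by noncomm_ring
      _ = b * (a * b') := by rw [h2]
      _ = b * a * b' := by noncomm_ring
  have key2 : b' = b * a * b' := by
    calc b' = b' * a * b' := h2'.symm
      _ = star (b' * a) * b' := by rw [h4']
      _ = star a * star b' * b' := by rw [star_mul]
      _ = star (a * b * a) * star b' * b' := by rw [h1]
      _ = star (b * a) * star (b' * a) * b' := by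
            simp only [star_mul]; noncomm_ring
      _ = (b * a) * (b' * a) * b' := by rw [h4, h4']
      _ = b * (a * b' * a) * b' := by noncomm_ring
      _ = b * a * b' := by rw [h1']
  rw [key1, ← key2]

private lemma mp_star (a b : R) (h : IsMP a b) : IsMP (star a) (star b) := by
  obtain ⟨h1, h2, h3, h4⟩ := h
  refine ⟨?_, ?_, ?_, ?_⟩
  · rw [← star_mul, ← star_mul, ← mul_assoc, h1]
  · rw [← star_mul, ← star_mul, ← mul_assoc, h2]
  · rw [← star_mul, star_star, h4]
  · rw [← star_mul, star_star, h3]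

theorem stmt7 (p q c d : R) (hp : IsProj p) (hq : IsProj q)
    (hc : IsMP ((1 - p) * q) c) (hd : IsMP ((1 - p) * q * (1 - p)) d) :
    c = q * d := by
  obtain ⟨hp2, hps⟩ := hp
  obtain ⟨hq2, hqs⟩ := hq
  set a : R := (1 - p) * q with ha
  have hstar1p : star (1 - p : R) = 1 - p := by rw [star_sub, star_one, hps]
  have hsa : star a = q * (1 - p) := by rw [ha, star_mul, hqs, hstar1p]
  have hqq : a * q = a := by rw [ha, mul_assoc, hq2]
  have hease : a * (1 - p) = a * star a := by rw [hsa, ← mul_assoc, hqq]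
  rw [hease] at hd
  obtain ⟨e1, e2, e3, e4⟩ := hd
  set e : R := a * star a with he
  have hse : star e = e := by rw [he, star_mul, star_star]
  -- d is self-adjoint
  have hds : star d = d := by
    have h' := mp_star e d ⟨e1, e2, e3, e4⟩
    rw [hse] at h'
    exact mp_unique e (star d) d h' ⟨e1, e2, e3, e4⟩
  -- d = e * (d * d)
  have hedd : d = e * (d * d) := by
    calc d = d * e * d := e2.symm
      _ = star (d * e) * d := by rw [e4]
      _ = e * (d * d) := by rw [star_mul, hse, hds]; noncomm_ring
  -- p * d = 0
  have hp1p : p * (1 - p) = 0 := by rw [mul_sub, mul_one, hp2, sub_self]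
  have hpa : p * a = 0 := by rw [ha, ← mul_assoc, hp1p, zero_mul]
  have hpd : p * d = 0 := by
    calc p * d = p * (e * (d * d)) := by rw [← hedd]
      _ = (p * a) * (star a * (d * d)) := by rw [he]; noncomm_ring
      _ = 0 := by rw [hpa, zero_mul]
  -- a = e * star c and star a = c * e
  have hac : a = e * star c := by
    obtain ⟨c1, c2, c3, c4⟩ := hc
    calc a = a * c * a := c1.symm
      _ = a * star (c * a) := by rw [c4]; noncomm_ring
      _ = a * (star a * star c) := by rw [star_mul]
      _ = e * star c := by rw [he]; noncomm_ring
  have hsac : star a = c * e := by rw [hac, star_mul, hse, star_star]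
  -- star a * d is a Moore-Penrose inverse of a
  have hmp : IsMP a (star a * d) := by
    refine ⟨?_, ?_, ?_, ?_⟩
    · calc a * (star a * d) * a = e * d * a := by rw [he]; noncomm_ring
        _ = e * d * (e * star c) := by rw [hac]
        _ = (e * d * e) * star c := by noncomm_ring
        _ = e * star c := by rw [e1]
        _ = a := hac.symm
    · calc star a * d * a * (star a * d) = star a * (d * e * d) := by
            rw [he]; noncomm_ring
        _ = star a * d := by rw [e2]
    · have h5 : a * (star a * d) = e * d := by rw [he]; noncomm_ring
      rw [h5]; exact e3
    · have key : star a * d * a = c * (e * star c) := by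
        rw [hsac, hac]
        calc c * e * d * (e * star c) = c * (e * d * e) * star c := by noncomm_ring
          _ = c * (e * star c) := by rw [e1]; noncomm_ring
      rw [key, star_mul, star_mul, star_star, hse]
      noncomm_ring
  have hfin : c = star a * d := mp_unique a c (star a * d) hc hmp
  rw [hfin, hsa]
  calc q * (1 - p) * d = q * d - q * (p * d) := by noncomm_ring
    _ = q * d := by rw [hpd, mul_zero, sub_zero]
end

section
/- Let p and q be projections in a *-ring with (1-p)q Moore-Penrose invertible. Then x = p + (1-p)((1-p)q)† is a projection and xR = pR + qR (equality of right ideals). -/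
variable {R : Type*} [Ring R] [StarRing R]

theorem stmt8 (p q c : R) (hp : IsProj p) (hq : IsProj q)
    (hc : IsMP ((1 - p) * q) c) :
    IsProj (p + (1 - p) * c) ∧ rid (p + (1 - p) * c) = sid (rid p) (rid q) := by
  obtain ⟨hp1, hp2⟩ := hp
  obtain ⟨hq1, hq2⟩ := hq
  obtain ⟨h1, h2, h3, h4⟩ := hc
  have hsa : star ((1 - p) * q) = q * (1 - p) := by
    rw [star_mul, star_sub, star_one, hp2, hq2]
  have hee : (1 - p) * (1 - p) = (1 - p) := by
    calc (1 - p) * (1 - p) = 1 - p - p + p * p := by noncomm_ring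
    _ = 1 - p := by rw [hp1]; noncomm_ring
  -- c * (1-p) = c
  have k1 : c = c * star c * (q * (1 - p)) := by
    calc c = c * ((1 - p) * q) * c := h2.symm
    _ = c * ((1 - p) * q * c) := by rw [mul_assoc]
    _ = c * star ((1 - p) * q * c) := by rw [h3]
    _ = c * (star c * star ((1 - p) * q)) := by rw [star_mul]
    _ = c * (star c * (q * (1 - p))) := by rw [hsa]
    _ = c * star c * (q * (1 - p)) := by rw [mul_assoc]
  have hce : c * (1 - p) = c := by
    conv_lhs => rw [k1]
    calc c * star c * (q * (1 - p)) * (1 - p)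
        = c * star c * (q * ((1 - p) * (1 - p))) := by
          simp only [mul_assoc]
    _ = c * star c * (q * (1 - p)) := by rw [hee]
    _ = c := k1.symm
  -- q * c = c
  have k2 : c = q * (1 - p) * star c * c := by
    calc c = c * ((1 - p) * q) * c := h2.symm
    _ = star (c * ((1 - p) * q)) * c := by rw [h4]
    _ = star ((1 - p) * q) * star c * c := by rw [star_mul]
    _ = q * (1 - p) * star c * c := by rw [hsa]
  have hqc : q * c = c := by
    conv_lhs => rw [k2]
    calc q * (q * (1 - p) * star c * c)
        = q * q * ((1 - p) * (star c * c)) := by simp only [mul_assoc]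
    _ = q * ((1 - p) * (star c * c)) := by rw [hq1]
    _ = q * (1 - p) * star c * c := by simp only [mul_assoc]
    _ = c := k2.symm
  have hac : (1 - p) * q * c = (1 - p) * c := by rw [mul_assoc, hqc]
  have hcc : c * c = c := by
    calc c * c = c * (1 - p) * c := by rw [hce]
    _ = c * ((1 - p) * c) := by rw [mul_assoc]
    _ = c * ((1 - p) * q * c) := by rw [hac]
    _ = c * ((1 - p) * q) * c := by rw [← mul_assoc]
    _ = c := h2
  have hcp : c * p = 0 := by
    calc c * p = c - c * (1 - p) := by noncomm_ring
    _ = 0 := by rw [hce, sub_self]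
  have hpe : p * (1 - p) = 0 := by rw [mul_sub, mul_one, hp1, sub_self]
  have hxp : (p + (1 - p) * c) * p = p := by
    calc (p + (1 - p) * c) * p = p * p + (1 - p) * (c * p) := by noncomm_ring
    _ = p := by rw [hp1, hcp, mul_zero, add_zero]
  have key : (1 - p) * c * q = (1 - p) * q := by
    calc (1 - p) * c * q = (1 - p) * q * c * q := by rw [hac]
    _ = (1 - p) * q * (c * (1 - p) * q) := by rw [hce]; rw [mul_assoc]
    _ = (1 - p) * q * (c * ((1 - p) * q)) := by rw [mul_assoc c]
    _ = (1 - p) * q * c * ((1 - p) * q) := by rw [← mul_assoc]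
    _ = (1 - p) * q := h1
  have hxq : (p + (1 - p) * c) * q = q := by
    calc (p + (1 - p) * c) * q = p * q + (1 - p) * c * q := by noncomm_ring
    _ = p * q + (1 - p) * q := by rw [key]
    _ = q := by noncomm_ring
  refine ⟨⟨?_, ?_⟩, ?_⟩
  · -- idempotent
    calc (p + (1 - p) * c) * (p + (1 - p) * c)
        = p * p + p * (1 - p) * c + (1 - p) * (c * p) + (1 - p) * (c * (1 - p) * c) := by
          noncomm_ring
    _ = p + (1 - p) * c := by
          rw [hp1, hpe, zero_mul, hcp, mul_zero, hce, hcc, add_zero, add_zero]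
  · -- self-adjoint
    rw [← hac, star_add, hp2, h3, hac]
  · ext z
    constructor
    · rintro ⟨r, rfl⟩
      refine ⟨p * (r - c * r), ⟨r - c * r, rfl⟩, q * (c * r), ⟨c * r, rfl⟩, ?_⟩
      rw [← mul_assoc q c r, hqc]
      noncomm_ring
    · rintro ⟨x, ⟨s, rfl⟩, y, ⟨t, rfl⟩, rfl⟩
      refine ⟨p * s + q * t, ?_⟩
      calc p * s + q * t
          = ((p + (1 - p) * c) * p) * s + ((p + (1 - p) * c) * q) * t := by
            rw [hxp, hxq]
      _ = (p + (1 - p) * c) * (p * s + q * t) := by noncomm_ring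
end

section
/- Let p and q be projections in a *-ring with p(1-q) Moore-Penrose invertible. Then y = p - p(p(1-q))† is a projection and yR = pR ∩ qR. -/
variable {R : Type*} [Ring R] [StarRing R]

theorem stmt9 (p q c : R) (hp : IsProj p) (hq : IsProj q)
    (hc : IsMP (p * (1 - q)) c) :
    IsProj (p - p * c) ∧ rid (p - p * c) = rid p ∩ rid q := by
  obtain ⟨hp1, hp2⟩ := hp
  obtain ⟨hq1, hq2⟩ := hq
  obtain ⟨a, ha⟩ : ∃ a : R, p * (1 - q) = a := ⟨_, rfl⟩
  rw [ha] at hc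
  obtain ⟨h1, h2, h3, h4⟩ := hc
  -- basic facts
  have hsa : star a = (1 - q) * p := by
    rw [← ha, star_mul, star_sub, star_one, hq2, hp2]
  have hpa : p * a = a := by
    rw [← ha, ← mul_assoc, hp1]
  -- a * c * p = a * c
  have hacp : a * c * p = a * c := by
    calc a * c * p = star (a * c) * p := by rw [h3]
      _ = star c * ((1 - q) * p) * p := by rw [star_mul, hsa]
      _ = star c * ((1 - q) * (p * p)) := by rw [mul_assoc, mul_assoc]
      _ = star c * ((1 - q) * p) := by rw [hp1]
      _ = star (a * c) := by rw [star_mul, hsa]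
      _ = a * c := h3
  have hcp : c * p = c := by
    calc c * p = c * a * c * p := by rw [h2]
      _ = c * a * (c * p) := by rw [mul_assoc (c * a)]
      _ = c * (a * (c * p)) := by rw [mul_assoc c a]
      _ = c * (a * c * p) := by rw [mul_assoc a c p]
      _ = c * (a * c) := by rw [hacp]
      _ = c := by rw [← mul_assoc, h2]
  have hpcs : p * star c = star c := by
    have h := congrArg star hcp
    rwa [star_mul, hp2] at h
  have hca_eq : c * a = (1 - q) * star c := by
    calc c * a = star (c * a) := h4.symm
      _ = star a * star c := by rw [star_mul]
      _ = (1 - q) * (p * star c) := by rw [hsa, mul_assoc]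
      _ = (1 - q) * star c := by rw [hpcs]
  have hqc : q * c = 0 := by
    have hq0 : q * (1 - q) = 0 := by rw [mul_sub, mul_one, hq1, sub_self]
    calc q * c = q * (c * a * c) := by rw [h2]
      _ = q * ((1 - q) * star c * c) := by rw [hca_eq]
      _ = q * (1 - q) * (star c * c) := by
          rw [mul_assoc (1 - q) (star c) c, ← mul_assoc q (1 - q) (star c * c)]
      _ = 0 := by rw [hq0, zero_mul]
  have hpc : p * c = a * c := by
    have hpeq : p = a + p * q := by
      rw [← ha, mul_sub, mul_one, sub_add_cancel]
    calc p * c = (a + p * q) * c := by rw [← hpeq]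
      _ = a * c + p * q * c := by rw [add_mul]
      _ = a * c + p * (q * c) := by rw [mul_assoc p q c]
      _ = a * c := by rw [hqc, mul_zero, add_zero]
  have he2 : a * c * (a * c) = a * c := by
    rw [← mul_assoc, h1]
  have hpe : p * (a * c) = a * c := by
    rw [← mul_assoc, hpa]
  -- (1 - q) * (a * c) = star a
  have hkey : (1 - q) * (a * c) = star a := by
    have ha' : a = a * star a * star c := by
      calc a = a * c * a := h1.symm
        _ = a * (c * a) := by rw [mul_assoc]
        _ = a * star (c * a) := by rw [h4]
        _ = a * (star a * star c) := by rw [star_mul]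
        _ = a * star a * star c := by rw [mul_assoc]
    have ha'' : star a = c * (a * star a) := by
      have h := congrArg star ha'
      rwa [star_mul (a * star a) (star c), star_mul a (star a), star_star,
        star_star] at h
    calc (1 - q) * (a * c) = (1 - q) * star (a * c) := by rw [h3]
      _ = (1 - q) * (star c * star a) := by rw [star_mul]
      _ = (1 - q) * star c * star a := by rw [mul_assoc]
      _ = c * a * star a := by rw [← hca_eq]
      _ = c * (a * star a) := by rw [mul_assoc]
      _ = star a := ha''.symm
  have hqy : q * (p - p * c) = p - p * c := by
    have h0 : p - p * c - q * (p - p * c) = 0 := by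
      calc p - p * c - q * (p - p * c) = (1 - q) * (p - p * c) := by
            rw [sub_mul, one_mul]
        _ = (1 - q) * p - (1 - q) * (a * c) := by rw [hpc, mul_sub]
        _ = 0 := by rw [hkey, ← hsa, sub_self]
    exact (sub_eq_zero.mp h0).symm
  have hpy : p * (p - p * c) = p - p * c := by
    rw [hpc, mul_sub, hp1, hpe]
  constructor
  · constructor
    · rw [hpc, sub_mul, mul_sub, mul_sub, hp1, hpe, hacp, he2]
      simp [sub_self]
    · rw [hpc, star_sub, hp2, h3]
  · ext x
    constructor
    · rintro ⟨r, rfl⟩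
      constructor
      · exact ⟨(p - p * c) * r, by rw [← mul_assoc, hpy]⟩
      · exact ⟨(p - p * c) * r, by rw [← mul_assoc, hqy]⟩
    · rintro ⟨⟨r1, hr1⟩, ⟨r2, hr2⟩⟩
      have hpx : p * x = x := by rw [hr1, ← mul_assoc, hp1]
      have hqx : q * x = x := by rw [hr2, ← mul_assoc, hq1]
      have hex : a * c * x = 0 := by
        calc a * c * x = star (a * c) * x := by rw [h3]
          _ = star c * ((1 - q) * p * x) := by
              rw [star_mul, hsa, mul_assoc, mul_assoc]
          _ = star c * ((1 - q) * x) := by rw [mul_assoc, hpx]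
          _ = star c * (x - q * x) := by rw [sub_mul, one_mul]
          _ = 0 := by rw [hqx, sub_self, mul_zero]
      refine ⟨x, ?_⟩
      rw [hpc, sub_mul, hpx, hex, sub_zero]
end

section
/- Let p and q be projections in a *-ring with (1-p)q Moore-Penrose invertible. Then pR + qR = R if and only if (1-p)q(1-p)R = (1-p)R. -/
variable {R : Type*} [Ring R] [StarRing R]

theorem stmt10 (p q : R) (hp : IsProj p) (hq : IsProj q)
    (hmp : ∃ c, IsMP ((1 - p) * q) c) :
    sid (rid p) (rid q) = Set.univ ↔ rid ((1 - p) * q * (1 - p)) = rid (1 - p) := by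
  obtain ⟨c, h1, h2, h3, h4⟩ := hmp
  obtain ⟨hp2, hps⟩ := hp
  obtain ⟨hq2, hqs⟩ := hq
  -- a * star a = (1-p)*q*(1-p)
  have hstar : star ((1 - p) * q) = q * (1 - p) := by
    rw [star_mul, hqs, star_sub, star_one, hps]
  have haa : ((1 - p) * q) * star ((1 - p) * q) = (1 - p) * q * (1 - p) := by
    rw [hstar]
    calc (1 - p) * q * (q * (1 - p)) = (1 - p) * (q * q) * (1 - p) := by noncomm_ring
    _ = (1 - p) * q * (1 - p) := by rw [hq2]
  -- key factorization: (1-p)*q = (1-p)*q*(1-p) * star c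
  have hfact : (1 - p) * q = (1 - p) * q * (1 - p) * star c := by
    calc (1 - p) * q = (1 - p) * q * c * ((1 - p) * q) := h1.symm
    _ = (1 - p) * q * (c * ((1 - p) * q)) := by rw [mul_assoc]
    _ = (1 - p) * q * (star ((1 - p) * q) * star c) := by rw [← star_mul, h4]
    _ = ((1 - p) * q * star ((1 - p) * q)) * star c := by noncomm_ring
    _ = (1 - p) * q * (1 - p) * star c := by rw [haa]
  constructor
  · intro h
    have h1mem : (1 : R) ∈ sid (rid p) (rid q) := by rw [h]; trivial
    obtain ⟨x, ⟨r, hr⟩, y, ⟨s, hs⟩, hxy⟩ := h1mem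
    -- (1-p) = (1-p)*q*s
    have he : (1 - p : R) = (1 - p) * q * s := by
      have : (1 - p : R) * 1 = (1 - p) * (p * r + q * s) := by
        rw [hr, hs] at hxy; rw [← hxy]
      calc (1 - p : R) = (1 - p) * (p * r) + (1 - p) * (q * s) := by
            rw [← mul_add]; simpa using this
      _ = (p - p * p) * r + (1 - p) * q * s := by noncomm_ring
      _ = (1 - p) * q * s := by rw [hp2]; simp
    have he2 : (1 - p : R) = (1 - p) * q * (1 - p) * (star c * s) := by
      calc (1 - p : R) = (1 - p) * q * s := he
      _ = ((1 - p) * q * (1 - p) * star c) * s := by rw [← hfact]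
      _ = (1 - p) * q * (1 - p) * (star c * s) := by rw [mul_assoc]
    ext z
    constructor
    · rintro ⟨r, rfl⟩
      exact ⟨q * ((1 - p) * r), by noncomm_ring⟩
    · rintro ⟨r, rfl⟩
      refine ⟨star c * s * r, ?_⟩
      calc (1 - p) * r = ((1 - p) * q * (1 - p) * (star c * s)) * r := by rw [← he2]
      _ = (1 - p) * q * (1 - p) * (star c * s * r) := by rw [mul_assoc]
  · intro h
    have hmem : (1 - p : R) ∈ rid ((1 - p) * q * (1 - p)) := by
      rw [h]; exact ⟨1, (mul_one _).symm⟩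
    obtain ⟨u, hu⟩ := hmem
    have hone : (1 : R) = p + (1 - p) * q * ((1 - p) * u) := by
      rw [← mul_assoc, ← hu]; noncomm_ring
    ext z
    simp only [Set.mem_univ, iff_true]
    refine ⟨p * ((1 - q * ((1 - p) * u)) * z), ⟨(1 - q * ((1 - p) * u)) * z, rfl⟩,
      q * ((1 - p) * u * z), ⟨(1 - p) * u * z, rfl⟩, ?_⟩
    calc z = (p + (1 - p) * q * ((1 - p) * u)) * z := by rw [← hone, one_mul]
    _ = p * ((1 - q * ((1 - p) * u)) * z) + q * ((1 - p) * u * z) := by noncomm_ring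
end

section
/- Let p and q be projections in a *-reducing ring R such that 1 - pq is Moore-Penrose invertible. Then ((1-q)p)† = (1-pq)†p(1-q), and this element is an idempotent. -/
variable {R : Type*} [Ring R] [StarRing R]

/-- Uniqueness of the Moore-Penrose inverse. -/
theorem mp_unique_s12 (a x y : R) (hx : IsMP a x) (hy : IsMP a y) : x = y := by
  obtain ⟨hx1, hx2, hx3, hx4⟩ := hx
  obtain ⟨hy1, hy2, hy3, hy4⟩ := hy
  have e1 : x = x * star x * star a := by
    calc x = x * (a * x) := by rw [← mul_assoc, hx2]
    _ = x * star (a * x) := by rw [hx3]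
    _ = x * (star x * star a) := by rw [star_mul]
    _ = x * star x * star a := by rw [mul_assoc]
  have e2 : x = x * a * y := by
    calc x = x * star x * star a := e1
    _ = x * star x * star (a * y * a) := by rw [hy1]
    _ = x * star x * (star a * (star y * star a)) := by rw [star_mul, star_mul]
    _ = (x * star x * star a) * (star y * star a) := by noncomm_ring
    _ = x * (star y * star a) := by rw [← e1]
    _ = x * star (a * y) := by rw [star_mul]
    _ = x * (a * y) := by rw [hy3]
    _ = x * a * y := by rw [mul_assoc]
  have f1 : y = star a * star y * y := by
    calc y = (y * a) * y := by rw [hy2]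
    _ = star (y * a) * y := by rw [hy4]
    _ = star a * star y * y := by rw [star_mul]
  have f2 : y = x * a * y := by
    calc y = star a * star y * y := f1
    _ = star (a * x * a) * star y * y := by rw [hx1]
    _ = (star a * (star x * star a)) * star y * y := by rw [star_mul, star_mul]
    _ = (star a * star x) * (star a * star y * y) := by noncomm_ring
    _ = (star a * star x) * y := by rw [← f1]
    _ = star (x * a) * y := by rw [star_mul]
    _ = (x * a) * y := by rw [hx4]
    _ = x * a * y := rfl
  rw [e2, ← f2]

set_option maxHeartbeats 1000000 in
theorem stmt12 (hred : ∀ a : R, star a * a = 0 → a = 0)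
    (p q c d : R) (hp : IsProj p) (hq : IsProj q)
    (hc : IsMP (1 - p * q) c) (hd : IsMP ((1 - q) * p) d) :
    d = c * (p * (1 - q)) ∧ d * d = d := by
  obtain ⟨hp2, hps⟩ := hp
  obtain ⟨hq2, hqs⟩ := hq
  obtain ⟨hc1, hc2, hc3, hc4⟩ := hc
  -- abbreviations (purely notational, written out in full below)
  -- u = 1 - p*q, S = 1 - c*u, r = 1 - u*c, a = (1-q)*p, e = c*(p*(1-q))
  -- basic annihilation facts
  have A2 : (1 - c*(1 - p*q)) * c = 0 := by
    linear_combination (norm := noncomm_ring) -hc2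
  have A4 : star (1 - c*(1 - p*q)) = 1 - c*(1 - p*q) := by
    rw [star_sub, star_one, hc4]
  have A5 : star (1 - (1 - p*q)*c) = 1 - (1 - p*q)*c := by
    rw [star_sub, star_one, hc3]
  have A6 : p*(q*(1 - c*(1 - p*q))) = 1 - c*(1 - p*q) := by
    linear_combination (norm := noncomm_ring) hc1
  have A7 : (1 - c*(1 - p*q))*q*p = 1 - c*(1 - p*q) := by
    have h := congrArg star A6
    rw [star_mul, star_mul, hps, hqs, A4] at h
    linear_combination (norm := noncomm_ring) h
  have A8 : p*(1 - c*(1 - p*q)) = 1 - c*(1 - p*q) := by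
    linear_combination (norm := noncomm_ring)
      -(p * A6) + hp2 * (q * (1 - c*(1 - p*q))) + A6
  have A9 : (1 - c*(1 - p*q))*p = 1 - c*(1 - p*q) := by
    linear_combination (norm := noncomm_ring)
      -(A7 * p) + ((1 - c*(1 - p*q)) * q) * hp2 + A7
  -- q * S = S, via *-reducing
  have hw : ((1 - c*(1 - p*q))*(1-q)) * ((1-q)*(1 - c*(1 - p*q))) = 0 := by
    linear_combination (norm := noncomm_ring)
      (1 - c*(1 - p*q)) * hq2 * (1 - c*(1 - p*q))
      - ((1 - c*(1 - p*q))*(1-q)) * A6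
      + A9 * (q * (1 - c*(1 - p*q)))
      - A7 * (q * (1 - c*(1 - p*q)))
  have h0 : star ((1-q)*(1 - c*(1 - p*q))) * ((1-q)*(1 - c*(1 - p*q))) = 0 := by
    rw [star_mul, A4, star_sub, star_one, hqs]; exact hw
  have hq0 := hred _ h0
  have A10 : q*(1 - c*(1 - p*q)) = 1 - c*(1 - p*q) := by
    linear_combination (norm := noncomm_ring) -hq0
  have A11 : (1 - c*(1 - p*q))*q = 1 - c*(1 - p*q) := by
    have h := congrArg star A10
    rw [star_mul, hqs, A4] at h
    exact h
  -- r-side facts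
  have B1 : (1 - (1 - p*q)*c)*(p*q) = 1 - (1 - p*q)*c := by
    linear_combination (norm := noncomm_ring) hc1
  have B2 : q*(p*(1 - (1 - p*q)*c)) = 1 - (1 - p*q)*c := by
    have h := congrArg star B1
    rw [star_mul, star_mul, hps, hqs, A5] at h
    linear_combination (norm := noncomm_ring) h
  have B3 : (1 - (1 - p*q)*c)*q = 1 - (1 - p*q)*c := by
    linear_combination (norm := noncomm_ring)
      -(B1 * q) + ((1 - (1 - p*q)*c) * p) * hq2 + B1
  -- p * r = r, via *-reducing
  have hv : ((1 - (1 - p*q)*c)*(1-p)) * ((1-p)*(1 - (1 - p*q)*c)) = 0 := by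
    linear_combination (norm := noncomm_ring)
      (1 - (1 - p*q)*c) * hp2 * (1 - (1 - p*q)*c)
      - ((1 - (1 - p*q)*c)*(1-p)) * B2
      + B3 * (p * (1 - (1 - p*q)*c))
      - B1 * (p * (1 - (1 - p*q)*c))
  have h0' : star ((1-p)*(1 - (1 - p*q)*c)) * ((1-p)*(1 - (1 - p*q)*c)) = 0 := by
    rw [star_mul, A5, star_sub, star_one, hps]; exact hv
  have hp0 := hred _ h0'
  have B5 : p*(1 - (1 - p*q)*c) = 1 - (1 - p*q)*c := by
    linear_combination (norm := noncomm_ring) -hp0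
  -- (1-p)c = 1-p
  have C1 : (1-p)*c = 1-p := by
    linear_combination (norm := noncomm_ring) B5 - hp2 * (q * c)
  -- main computations; e = c*(p*(1-q)), a = (1-q)*p
  have M1 : (c*(p*(1-q))) * ((1-q)*p) = p - (1 - c*(1 - p*q)) := by
    linear_combination (norm := noncomm_ring) (c*p)*hq2*p + c*hp2 - A9
  have M2 : (c*(p*(1-q))) * p = p - (1 - c*(1 - p*q)) := by
    linear_combination (norm := noncomm_ring) c*hp2 - A9
  have M3 : ((1-q)*p) * (c*(p*(1-q))) * ((1-q)*p) = (1-q)*p := by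
    linear_combination (norm := noncomm_ring)
      ((1-q)*p)*M1 + (1-q)*hp2 - (1-q)*A8 + A10
  have M4 : p * (c*(p*(1-q))) = c*(p*(1-q)) := by
    linear_combination (norm := noncomm_ring) - C1 * (p*(1-q)) + hp2 * (1-q)
  have M5 : (c*(p*(1-q))) * ((1-q)*p) * (c*(p*(1-q))) = c*(p*(1-q)) := by
    linear_combination (norm := noncomm_ring)
      M1 * (c*(p*(1-q))) + M4 - A2 * (p*(1-q))
  -- Penrose equation 3
  have hstar : star (((1-q)*p) * (c*(p*(1-q)))) = ((1-q)*p) * (star c*(p*(1-q))) := by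
    simp only [star_mul, star_sub, star_one, hps, hqs]
    noncomm_ring
  have key' : (((1-q)*p) * (c*(p*(1-q)))) * (((1-q)*p) * (star c*(p*(1-q))))
      = ((1-q)*p) * (star c*(p*(1-q))) := by
    linear_combination (norm := noncomm_ring)
      ((1-q)*(p*(c*p)))*hq2*(p*(star c*(p*(1-q))))
      + ((1-q)*(p*c))*hp2*(star c*(p*(1-q)))
      + (1-q)*hp2*(star c*(p*(1-q)))
      - ((1-q)*p)*A9*(star c*(p*(1-q)))
      - (1-q)*A8*(star c*(p*(1-q)))
      + A10*(star c*(p*(1-q)))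
  have key : (((1-q)*p) * (c*(p*(1-q)))) * star (((1-q)*p) * (c*(p*(1-q))))
      = star (((1-q)*p) * (c*(p*(1-q)))) := by
    rw [hstar]; exact key'
  have M7 : star (((1-q)*p) * (c*(p*(1-q)))) = ((1-q)*p) * (c*(p*(1-q))) := by
    have h1 := congrArg star key
    rw [star_mul, star_star] at h1
    exact key.symm.trans h1
  have M8 : star ((c*(p*(1-q))) * ((1-q)*p)) = (c*(p*(1-q))) * ((1-q)*p) := by
    rw [M1, star_sub, hps, A4]
  have hmp : IsMP ((1 - q) * p) (c*(p*(1-q))) := ⟨M3, M5, M7, M8⟩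
  have hde : d = c*(p*(1-q)) := mp_unique_s12 _ _ _ hd hmp
  refine ⟨hde, ?_⟩
  rw [hde]
  -- idempotency
  linear_combination (norm := noncomm_ring)
    -((c*(p*(1-q)))*M4) + M2*(c*(p*(1-q))) + M4 - A2 * (p*(1-q))
end

section
/- Let p and q be projections in a *-reducing ring R such that 1 - pq is Moore-Penrose invertible. Then ((1-q)p)† R = pR ∩ ((1-p)R + (1-q)R). -/
variable {R : Type*} [Ring R] [StarRing R]

lemma rid_sub {a b : R} (h : ∃ r, a = b * r) : rid a ⊆ rid b := by
  rintro x ⟨s, rfl⟩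
  obtain ⟨r, rfl⟩ := h
  exact ⟨r * s, by rw [mul_assoc]⟩

theorem stmt13 (hred : ∀ a : R, star a * a = 0 → a = 0)
    (p q c d : R) (hp : IsProj p) (hq : IsProj q)
    (hc : IsMP (1 - p * q) c) (hd : IsMP ((1 - q) * p) d) :
    rid d = rid p ∩ sid (rid (1 - p)) (rid (1 - q)) := by
  obtain ⟨h1, h2, h3, h4⟩ := hd
  obtain ⟨hpp, hps⟩ := hp
  obtain ⟨hqq, hqs⟩ := hq
  have hastar : star ((1 - q) * p) = p * (1 - q) := by
    rw [star_mul, star_sub, star_one, hps, hqs]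
  -- d R = p(1-q) R
  have key : rid d = rid (p * (1 - q)) := by
    apply Set.Subset.antisymm
    · apply rid_sub
      refine ⟨star d * d, ?_⟩
      calc d = d * ((1 - q) * p) * d := h2.symm
        _ = star (d * ((1 - q) * p)) * d := by rw [h4]
        _ = star ((1 - q) * p) * star d * d := by rw [star_mul]
        _ = p * (1 - q) * (star d * d) := by rw [hastar, mul_assoc]
    · apply rid_sub
      refine ⟨(1 - q) * p * (p * (1 - q)), ?_⟩
      calc p * (1 - q) = star ((1 - q) * p) := hastar.symm
        _ = star ((1 - q) * p * d * ((1 - q) * p)) := by rw [h1]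
        _ = star (d * ((1 - q) * p)) * star ((1 - q) * p) := by
              rw [mul_assoc, star_mul]
        _ = d * ((1 - q) * p) * (p * (1 - q)) := by rw [h4, hastar]
        _ = d * ((1 - q) * p * (p * (1 - q))) := by rw [mul_assoc]
  rw [key]
  ext z
  constructor
  · rintro ⟨r, rfl⟩
    refine ⟨⟨(1 - q) * r, by rw [mul_assoc]⟩, ?_⟩
    refine ⟨(1 - p) * (-((1 - q) * r)), ⟨_, rfl⟩, (1 - q) * r, ⟨_, rfl⟩, ?_⟩
    noncomm_ring
  · rintro ⟨⟨s, hs⟩, x, ⟨u, hu⟩, y, ⟨v, hv⟩, hz⟩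
    refine ⟨v, ?_⟩
    have hpz : p * z = z := by rw [hs, ← mul_assoc, hpp]
    have : p * z = p * (1 - q) * v := by
      rw [hz, hu, hv, mul_add, ← mul_assoc, ← mul_assoc]
      have : p * (1 - p) = 0 := by rw [mul_sub, mul_one, hpp, sub_self]
      rw [this, zero_mul, zero_add]
    rw [← hpz, this]
end

section
/- Let p and q be projections in a *-reducing ring R such that 1 - pq is Moore-Penrose invertible. Then (1 - ((1-q)p)†)R = ((1-p)R ∩ (1-q)R) + qR, and moreover this sum is orthogonal: y*x = 0 for every x ∈ (1-p)R ∩ (1-q)R and y ∈ qR. -/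
variable {R : Type*} [Ring R] [StarRing R]

theorem stmt14 (hred : ∀ a : R, star a * a = 0 → a = 0)
    (p q c d : R) (hp : IsProj p) (hq : IsProj q)
    (hc : IsMP (1 - p * q) c) (hd : IsMP ((1 - q) * p) d) :
    rid (1 - d) = sid (rid (1 - p) ∩ rid (1 - q)) (rid q) ∧
    (∀ x ∈ rid (1 - p) ∩ rid (1 - q), ∀ y ∈ rid q, star y * x = 0) := by
  obtain ⟨hp2, hps⟩ := hp
  obtain ⟨hq2, hqs⟩ := hq
  obtain ⟨a, ha⟩ : ∃ x : R, x = (1 - q) * p := ⟨_, rfl⟩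
  rw [← ha] at hd
  obtain ⟨m1, m2, m3, m4⟩ := hd
  -- basic facts
  have sa : star a = p * (1 - q) := by
    rw [ha, star_mul, hps, star_sub, star_one, hqs]
  have ap : a * p = a := by rw [ha, mul_assoc, hp2]
  have hq2' : (1 - q) * (1 - q) = 1 - q := by
    have : (1 - q) * (1 - q) = 1 - q - q + q * q := by noncomm_ring
    rw [this, hq2]; abel
  have sap : star a * p = star a * a := by
    have e1 : star a * p = p * (1 - q) * p := by rw [sa]
    have e2 : star a * a = p * (1 - q) * p := by
      rw [sa, ha, show p * (1 - q) * ((1 - q) * p) = p * ((1 - q) * (1 - q)) * p from by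
        noncomm_ring, hq2']
    rw [e1, e2]
  have pas : p * star a = star a := by rw [sa, ← mul_assoc, hp2]
  have saq : star a * q = 0 := by
    have h0 : (1 - q) * q = 0 := by rw [sub_mul, one_mul, hq2, sub_self]
    rw [sa, mul_assoc, h0, mul_zero]
  have S3 : a * a = a * star a * p := by
    have : a * star a * p = a * a := by
      calc a * star a * p = a * (p * (1 - q)) * p := by rw [sa]
        _ = a * p * ((1 - q) * p) := by noncomm_ring
        _ = a * ((1 - q) * p) := by rw [ap]
        _ = a * a := by rw [← ha]
    rw [this]
  -- derived facts about d
  have d1 : d * star d * star a = d := by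
    calc d * star d * star a = d * (star d * star a) := by rw [mul_assoc]
      _ = d * star (a * d) := by rw [← star_mul]
      _ = d * (a * d) := by rw [m3]
      _ = d := by rw [← mul_assoc, m2]
  have sae : star a * star d = d * a := by rw [← m4, star_mul]
  have hL : star a * star d * d = d := by rw [sae, m2]
  have pd : p * d = d := by
    calc p * d = p * (star a * star d * d) := by rw [hL]
      _ = p * star a * (star d * d) := by noncomm_ring
      _ = star a * (star d * d) := by rw [pas]
      _ = d := by rw [← mul_assoc, hL]
  have dp : d * p = d * a := by
    calc d * p = d * star d * star a * p := by rw [d1]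
      _ = d * star d * (star a * p) := by rw [mul_assoc]
      _ = d * star d * (star a * a) := by rw [sap]
      _ = d * star d * star a * a := by rw [← mul_assoc]
      _ = d * a := by rw [d1]
  have pe : p * star d = d * a := by
    calc p * star d = star (d * p) := by rw [star_mul, hps]
      _ = star (d * a) := by rw [dp]
      _ = d * a := m4
  have ep : star d * p = star d := by
    calc star d * p = star (p * d) := by rw [star_mul, hps]
      _ = star d := by rw [pd]
  have h17 : d * star d * (1 - q) = d := by
    have h17a : d * star d * (p * (1 - q)) = d := by rw [← sa, d1]
    calc d * star d * (1 - q) = d * (star d * p) * (1 - q) := by rw [ep]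
      _ = d * star d * (p * (1 - q)) := by noncomm_ring
      _ = d := h17a
  have heq : d * star d * q = d * star d - d := by
    have h' := h17
    rw [mul_sub, mul_one] at h'
    calc d * star d * q = d * star d - (d * star d - d * star d * q) := by abel
      _ = d * star d - d := by rw [h']
  have qe : q * (d * star d) = d * star d - star d := by
    calc q * (d * star d) = star (d * star d * q) := by
          rw [star_mul, star_mul, star_star, hqs]
      _ = star (d * star d - d) := by rw [heq]
      _ = d * star d - star d := by rw [star_sub, star_mul, star_star]
  have L2 : d * a * star a = star a := by
    have hst : star (d * a * star a) = a := by
      calc star (d * a * star a) = star (star a) * star (d * a) := by rw [star_mul]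
        _ = a * (d * a) := by rw [star_star, m4]
        _ = a := by rw [← mul_assoc, m1]
    have := congrArg star hst
    rwa [star_star] at this
  have C1 : d * (a * a) = star a * a := by
    calc d * (a * a) = d * (a * star a * p) := by rw [S3]
      _ = d * a * star a * p := by noncomm_ring
      _ = star a * p := by rw [L2]
      _ = star a * a := sap
  have sad : star a * d = d - p * q * d := by
    calc star a * d = p * (1 - q) * d := by rw [sa]
      _ = p * d - p * (q * d) := by noncomm_ring
      _ = d - p * q * d := by rw [pd, ← mul_assoc]
  have ea : star d * a = star d - star d * q * p := by
    calc star d * a = star d * ((1 - q) * p) := by rw [ha]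
      _ = star d * p - star d * q * p := by noncomm_ring
      _ = star d - star d * q * p := by rw [ep]
  -- the four terms of star z * z
  have t2 : star a * (star d * a) = star a * a := by
    calc star a * (star d * a) = star a * star d * a := by rw [mul_assoc]
      _ = d * a * a := by rw [sae]
      _ = d * (a * a) := by rw [mul_assoc]
      _ = star a * a := C1
  have t3 : star a * d * a = star a * a := by
    have e : star a * star d * a = star a * a := by rw [sae, mul_assoc, C1]
    have hc2 := congrArg star e
    have l : star (star a * star d * a) = star a * (d * a) := by
      rw [star_mul, star_mul, star_star, star_star]
    have r : star (star a * a) = star a * a := by rw [star_mul, star_star]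
    rw [l, r, ← mul_assoc] at hc2
    exact hc2
  have t4 : star a * d * (star d * a) = star a * a := by
    -- first compute LHS = d*a - p*q*(d*a)
    have lhs_eq : star a * d * (star d * a) = d * a - p * q * (d * a) := by
      rw [sad, ea]
      have expand : (d - p * q * d) * (star d - star d * q * p) =
          d * star d - d * star d * q * p - p * (q * (d * star d)) +
            p * (q * (d * star d * q)) * p := by noncomm_ring
      rw [expand, heq, qe]
      have e2 : (d * star d - d) * p = d * star d - d * a := by
        rw [sub_mul, dp]
        have : d * star d * p = d * star d := by rw [mul_assoc, ep]
        rw [this]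
      have e3 : p * (d * star d - star d) = d * star d - d * a := by
        rw [mul_sub, pe, ← mul_assoc, pd]
      have e4 : p * (q * (d * star d - d)) * p = d * star d - d * a - p * q * (d * a) := by
        have : q * (d * star d - d) = d * star d - star d - q * d := by
          rw [mul_sub, qe]
        rw [this]
        have : p * (d * star d - star d - q * d) * p =
            p * (d * star d) * p - p * star d * p - p * q * (d * p) := by noncomm_ring
        rw [this, ← mul_assoc, pd, mul_assoc, ep, pe, mul_assoc d a p, ap, dp]
      rw [e2, e3, e4]
      abel
    rw [lhs_eq]
    have : d * a - p * q * (d * a) = star a * d * a := by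
      rw [sad]; noncomm_ring
    rw [this, t3]
  -- the key identity: star a * d = star a
  have sz : star (a - star d * a) = star a - star a * d := by
    rw [star_sub, star_mul, star_star]
  have key : star a * d = star a := by
    have hzz : star (a - star d * a) * (a - star d * a) = 0 := by
      rw [sz]
      have expand : (star a - star a * d) * (a - star d * a) =
          star a * a - star a * (star d * a) - star a * d * a +
            star a * d * (star d * a) := by noncomm_ring
      rw [expand, t2, t3, t4]
      abel
    have hz0 : a - star d * a = 0 := hred _ hzz
    have h0 : star a - star a * d = 0 := by rw [← sz, hz0, star_zero]
    exact (sub_eq_zero.mp h0).symm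
  -- annihilation facts
  have dq : d * q = 0 := by
    calc d * q = d * star d * star a * q := by rw [d1]
      _ = d * star d * (star a * q) := by rw [mul_assoc]
      _ = 0 := by rw [saq, mul_zero]
  have du : ∀ u : R, p * u = 0 → q * u = 0 → d * u = 0 := by
    intro u hpu hqu
    calc d * u = d * star d * star a * u := by rw [d1]
      _ = d * star d * (p * u - p * (q * u)) := by rw [sa]; noncomm_ring
      _ = 0 := by rw [hpu, hqu, mul_zero, sub_zero, mul_zero]
  constructor
  · ext x
    simp only [rid, sid, Set.mem_setOf_eq, Set.mem_inter_iff]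
    constructor
    · rintro ⟨r, rfl⟩
      refine ⟨(1 - q) * ((1 - d) * r), ⟨⟨(1 - q) * ((1 - d) * r), ?_⟩,
        ⟨(1 - d) * r, rfl⟩⟩, q * ((1 - d) * r), ⟨(1 - d) * r, rfl⟩, by noncomm_ring⟩
      have pu0 : p * ((1 - q) * ((1 - d) * r)) = 0 := by
        have h' : p * ((1 - q) * ((1 - d) * r)) = (star a - star a * d) * r := by
          rw [sa]; noncomm_ring
        rw [h', key, sub_self, zero_mul]
      have : (1 - p) * ((1 - q) * ((1 - d) * r)) = (1 - q) * ((1 - d) * r) := by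
        rw [sub_mul, one_mul, pu0, sub_zero]
      exact this.symm
    · rintro ⟨u, ⟨⟨s, hus⟩, ⟨t, hut⟩⟩, v, ⟨w, hvw⟩, rfl⟩
      have pu0 : p * u = 0 := by
        rw [hus, show p * ((1 - p) * s) = (p - p * p) * s from by noncomm_ring, hp2,
          sub_self, zero_mul]
      have qu0 : q * u = 0 := by
        rw [hut, show q * ((1 - q) * t) = (q - q * q) * t from by noncomm_ring, hq2,
          sub_self, zero_mul]
      have hdu : d * u = 0 := du u pu0 qu0
      have hdv : d * v = 0 := by rw [hvw, ← mul_assoc, dq, zero_mul]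
      exact ⟨u + v, by rw [sub_mul, one_mul, mul_add, hdu, hdv, add_zero, sub_zero]⟩
  · rintro x ⟨⟨r1, hx1⟩, ⟨r2, hx2⟩⟩ y ⟨r3, rfl⟩
    have hq0 : q * (1 - q) = 0 := by rw [mul_sub, mul_one, hq2, sub_self]
    calc star (q * r3) * x = star r3 * (q * x) := by rw [star_mul, hqs, mul_assoc]
      _ = star r3 * (q * ((1 - q) * r2)) := by rw [hx2]
      _ = 0 := by rw [← mul_assoc q, hq0, zero_mul, mul_zero]
end

section
/- Let p and q be projections in a *-reducing ring R such that 1 - pq is Moore-Penrose invertible and pR ∩ qR = {0}. Then 1 - pq is invertible and ((1-q)p)† = (1-pq)^{-1} p(1-q), with ((1-q)p)† R = pR. -/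
variable {R : Type*} [Ring R] [StarRing R]

private lemma proj_compl {S : Type*} [Ring S] {r : S} (h : r * r = r) :
    (1 - r) * (1 - r) = 1 - r := by
  rw [sub_mul, one_mul, mul_sub, mul_one, h]; abel

theorem stmt15 (hred : ∀ a : R, star a * a = 0 → a = 0)
    (p q c d : R) (hp : IsProj p) (hq : IsProj q)
    (hc : IsMP (1 - p * q) c) (hd : IsMP ((1 - q) * p) d)
    (hint : rid p ∩ rid q = {0}) :
    (∃ u : Rˣ, (u : R) = 1 - p * q ∧ d = (↑u⁻¹ : R) * (p * (1 - q))) ∧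
    rid d = rid p := by
  obtain ⟨hp2, hps⟩ := hp
  obtain ⟨hq2, hqs⟩ := hq
  obtain ⟨hc1, hc2, hc3, hc4⟩ := hc
  obtain ⟨hd1, hd2, hd3, hd4⟩ := hd
  set u := 1 - p * q with hu_def
  set a := (1 - q) * p with ha_def
  have hzero : ∀ x : R, (∃ r, x = p * r) → (∃ r, x = q * r) → x = 0 := by
    intro x h1 h2
    have hx : x ∈ rid p ∩ rid q := ⟨h1, h2⟩
    rw [hint] at hx
    simpa using hx
  have hstar_a : star a = p * (1 - q) := by
    rw [ha_def, star_mul, hps, star_sub, star_one, hqs]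
  -- ================= c * u = 1 =================
  have hcu : c * u = 1 := by
    set g := 1 - c * u with hg_def
    have hug : u * g = 0 := by
      have e : u * (1 - c * u) = u - u * c * u := by noncomm_ring
      rw [hg_def, e, hc1, sub_self]
    have hgst : star g = g := by rw [hg_def, star_sub, star_one, hc4]
    have hgp : g = p * (q * g) := by
      have e : u * g = g - p * (q * g) := by rw [hu_def]; noncomm_ring
      have : g - p * (q * g) = 0 := by rw [← e, hug]
      exact (sub_eq_zero.mp this)
    have hpg : p * g = g := by
      calc p * g = p * (p * (q * g)) := by rw [← hgp]
        _ = (p * p) * (q * g) := by rw [mul_assoc]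
        _ = p * (q * g) := by rw [hp2]
        _ = g := hgp.symm
    have hyag : (1 - q) * g = a * g := by rw [ha_def, mul_assoc, hpg]
    have hkey : star a * (a * g) = 0 := by
      rw [hstar_a, ha_def]
      have e : p * (1 - q) * ((1 - q) * p * g) = p * (((1 - q) * (1 - q)) * (p * g)) := by
        noncomm_ring
      rw [e, proj_compl hq2, hpg]
      have e2 : p * ((1 - q) * g) = p * g - p * (q * g) := by noncomm_ring
      rw [e2, hpg, ← hgp, sub_self]
    have hy : (1 - q) * g = 0 := by
      apply hred
      rw [hyag, star_mul, hgst]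
      calc g * star a * (a * g) = g * (star a * (a * g)) := by rw [mul_assoc]
        _ = 0 := by rw [hkey, mul_zero]
    have hqg : q * g = g := by
      have e : (1 - q) * g = g - q * g := by noncomm_ring
      have : g - q * g = 0 := by rw [← e, hy]
      exact (sub_eq_zero.mp this).symm
    have hg0 : g = 0 := hzero g ⟨q * g, hgp⟩ ⟨g, hqg.symm⟩
    have : (1 : R) - c * u = 0 := by rw [← hg_def, hg0]
    exact (sub_eq_zero.mp this).symm
  -- ================= u * c = 1 =================
  have huc : u * c = 1 := by
    set h := 1 - u * c with hh_def
    have hhu : h * u = 0 := by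
      have e : (1 - u * c) * u = u - u * c * u := by noncomm_ring
      rw [hh_def, e, hc1, sub_self]
    have hhst : star h = h := by rw [hh_def, star_sub, star_one, hc3]
    have hh1 : h = h * p * q := by
      have e : h * u = h - h * p * q := by rw [hu_def]; noncomm_ring
      have : h - h * p * q = 0 := by rw [← e, hhu]
      exact (sub_eq_zero.mp this)
    have hh2 : h = q * (p * h) := by
      calc h = star h := hhst.symm
        _ = star (h * p * q) := by rw [← hh1]
        _ = q * (p * h) := by rw [star_mul, star_mul, hqs, hps, hhst]
    have hqh : q * h = h := by
      calc q * h = q * (q * (p * h)) := by rw [← hh2]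
        _ = (q * q) * (p * h) := by rw [mul_assoc]
        _ = q * (p * h) := by rw [hq2]
        _ = h := hh2.symm
    have hph_pq : p * h = p * q * (p * h) := by
      calc p * h = p * (q * (p * h)) := by conv_lhs => rw [hh2]
        _ = p * q * (p * h) := by rw [mul_assoc]
    have hz_eq : a * h = p * h - h := by
      rw [ha_def]
      calc (1 - q) * p * h = p * h - q * (p * h) := by noncomm_ring
        _ = p * h - h := by rw [← hh2]
    have hzform : h - p * h = a * (-h) := by rw [mul_neg, hz_eq, neg_sub]
    have hkey2 : star a * (a * -h) = 0 := by
      rw [← hzform, hstar_a]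
      calc p * (1 - q) * (h - p * h)
          = (p * h - (p * p) * h) - (p * (q * h) - p * q * (p * h)) := by noncomm_ring
        _ = (p * h - p * h) - (p * h - p * h) := by rw [hp2, hqh, ← hph_pq]
        _ = 0 := by simp
    have hz : h - p * h = 0 := by
      apply hred
      rw [hzform, star_mul, star_neg, hhst]
      calc -h * star a * (a * -h) = -h * (star a * (a * -h)) := by rw [mul_assoc]
        _ = 0 := by rw [hkey2, mul_zero]
    have hph : p * h = h := (sub_eq_zero.mp hz).symm
    have hh0 : h = 0 := hzero h ⟨h, hph.symm⟩ ⟨p * h, hh2⟩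
    have : (1 : R) - u * c = 0 := by rw [← hh_def, hh0]
    exact (sub_eq_zero.mp this).symm
  -- ================= d * a = p =================
  have hap : a * p = a := by rw [ha_def, mul_assoc, hp2]
  have hfp : (d * a) * p = d * a := by rw [mul_assoc, hap]
  have hpf : p * (d * a) = d * a := by
    have e : star (p * (d * a)) = d * a := by rw [star_mul, hd4, hps, hfp]
    calc p * (d * a) = star (star (p * (d * a))) := (star_star _).symm
      _ = star (d * a) := by rw [e]
      _ = d * a := hd4
  have hpmf_p : p - d * a = p * (p - d * a) := by rw [mul_sub, hp2, hpf]
  have haf : a * (d * a) = a := by rw [← mul_assoc, hd1]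
  have hq_pmf : p - d * a = q * (p - d * a) := by
    have e0 : a * (p - d * a) = 0 := by rw [mul_sub, hap, haf, sub_self]
    have e1 : a * (p - d * a) = (1 - q) * (p - d * a) := by
      calc a * (p - d * a) = (1 - q) * (p * (p - d * a)) := by rw [ha_def, mul_assoc]
        _ = (1 - q) * (p - d * a) := by rw [← hpmf_p]
    have e2 : (1 - q) * (p - d * a) = (p - d * a) - q * (p - d * a) := by noncomm_ring
    have : (p - d * a) - q * (p - d * a) = 0 := by rw [← e2, ← e1, e0]
    exact (sub_eq_zero.mp this)
  have hfp0 : p - d * a = 0 := hzero _ ⟨p - d * a, hpmf_p⟩ ⟨p - d * a, hq_pmf⟩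
  have hda : d * a = p := (sub_eq_zero.mp hfp0).symm
  have hpd : p * d = d := by rw [← hda, hd2]
  -- ================= u * d = p * (1 - q) =================
  have hqa : q * a = 0 := by
    calc q * a = (q - q * q) * p := by rw [ha_def]; noncomm_ring
      _ = 0 := by rw [hq2, sub_self, zero_mul]
  have hqe : q * (a * d) = 0 := by rw [← mul_assoc, hqa, zero_mul]
  have heq : (a * d) * q = 0 := by
    have e : star ((a * d) * q) = 0 := by rw [star_mul, hqs, hd3, hqe]
    calc (a * d) * q = star (star ((a * d) * q)) := (star_star _).symm
      _ = 0 := by rw [e, star_zero]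
  have hsq_a : ((1 - q) - a * d) * a = 0 := by
    have e : ((1 - q) - a * d) * a = (a - q * a) - (a * d) * a := by noncomm_ring
    rw [e, hqa, hd1]; abel
  have hs1q : ((1 - q) - a * d) * (1 - q) = (1 - q) - a * d := by
    have e : ((1 - q) - a * d) * (1 - q) = ((1 - q) * (1 - q)) - ((a * d) - (a * d) * q) := by
      noncomm_ring
    rw [e, proj_compl hq2, heq, sub_zero]
  have hsp : ((1 - q) - a * d) * p = 0 := by
    calc ((1 - q) - a * d) * p = (((1 - q) - a * d) * (1 - q)) * p := by rw [hs1q]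
      _ = ((1 - q) - a * d) * ((1 - q) * p) := by rw [mul_assoc]
      _ = ((1 - q) - a * d) * a := by rw [← ha_def]
      _ = 0 := hsq_a
  have hps0 : p * ((1 - q) - a * d) = 0 := by
    have hss : star ((1 - q) - a * d) = (1 - q) - a * d := by
      rw [star_sub, star_sub, star_one, hqs, hd3]
    calc p * ((1 - q) - a * d) = star (star ((1 - q) - a * d) * star p) := by
          rw [← star_mul, star_star]
      _ = star (((1 - q) - a * d) * p) := by rw [hss, hps]
      _ = 0 := by rw [hsp, star_zero]
  have hupd : u * p = star a * a := by
    rw [hstar_a, ha_def, hu_def]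
    have eL : (1 - p * q) * p = p - p * (q * p) := by noncomm_ring
    have eR : (p * (1 - q)) * ((1 - q) * p)
        = p * p - p * (q * p) - p * (q * p) + p * ((q * q) * p) := by noncomm_ring
    rw [eL, eR, hq2, hp2]; abel
  have e1q_e : (1 - q) * (a * d) = a * d := by rw [sub_mul, one_mul, hqe, sub_zero]
  have hud : u * d = p * (1 - q) := by
    calc u * d = u * (p * d) := by rw [hpd]
      _ = (u * p) * d := by rw [mul_assoc]
      _ = (star a * a) * d := by rw [hupd]
      _ = star a * (a * d) := by rw [mul_assoc]
      _ = p * ((1 - q) * (a * d)) := by rw [hstar_a, mul_assoc]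
      _ = p * (a * d) := by rw [e1q_e]
      _ = p * (1 - q) - p * ((1 - q) - a * d) := by noncomm_ring
      _ = p * (1 - q) := by rw [hps0, sub_zero]
  have hdfinal : d = c * (p * (1 - q)) := by
    calc d = 1 * d := (one_mul d).symm
      _ = (c * u) * d := by rw [hcu]
      _ = c * (u * d) := by rw [mul_assoc]
      _ = c * (p * (1 - q)) := by rw [hud]
  refine ⟨⟨⟨u, c, huc, hcu⟩, rfl, hdfinal⟩, ?_⟩
  ext x
  constructor
  · rintro ⟨r, rfl⟩
    exact ⟨d * r, by rw [← mul_assoc, hpd]⟩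
  · rintro ⟨r, rfl⟩
    exact ⟨a * r, by rw [← mul_assoc, hda]⟩
end

section
/- Let p and q be projections in a *-reducing ring R with 1 - pq Moore-Penrose invertible. Then pR ∩ qR = {0} if and only if 1 - pq is invertible. -/
variable {R : Type*} [Ring R] [StarRing R]

/-- Key lemma: if `(1 - p*q) * x = 0` then `x` is fixed by both `p` and `q`. -/
lemma ker_sub_aux (hred : ∀ a : R, star a * a = 0 → a = 0) {p q : R}
    (hp : IsProj p) (hq : IsProj q) {x : R} (h : (1 - p * q) * x = 0) :
    p * x = x ∧ q * x = x := by
  have hx : p * q * x = x := by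
    have h' : x - p * q * x = 0 := by
      have e : (1 - p * q) * x = x - p * q * x := by noncomm_ring
      rw [e] at h; exact h
    have := sub_eq_zero.mp h'
    exact this.symm
  have hpx : p * x = x := by
    conv_lhs => rw [← hx]
    have e : p * (p * q * x) = p * p * q * x := by noncomm_ring
    rw [e, hp.1, hx]
  have hsq : star x * x = star x * (q * x) := by
    have e0 : star x * x = star x * (p * q * x) := by rw [hx]
    rw [e0]
    have e : star x * (p * q * x) = star x * p * (q * x) := by noncomm_ring
    have e2 : star x * p = star x := by
      have : star x * p = star (star p * x) := by rw [star_mul, star_star]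
      rw [this, hp.2, hpx]
    rw [e, e2]
  have hqx : q * x = x := by
    have h0 : star (x - q * x) * (x - q * x) = 0 := by
      have e1 : star (x - q * x) = star x - star x * q := by
        rw [star_sub, star_mul, hq.2]
      have e2 : star x * q * (q * x) = star x * (q * x) := by
        have : star x * q * (q * x) = star x * (q * q) * x := by noncomm_ring
        rw [this, hq.1]; noncomm_ring
      have e3 : star x * q * x = star x * (q * x) := by noncomm_ring
      have e4 : (star x - star x * q) * (x - q * x)
          = star x * x - star x * (q * x) - (star x * q * x - star x * q * (q * x)) := by
        noncomm_ring
      rw [e1, e4, hsq, e2, e3]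
      abel
    have := hred _ h0
    have := sub_eq_zero.mp this
    exact this.symm
  exact ⟨hpx, hqx⟩

theorem stmt16 (hred : ∀ a : R, star a * a = 0 → a = 0)
    (p q c : R) (hp : IsProj p) (hq : IsProj q)
    (hc : IsMP (1 - p * q) c) :
    rid p ∩ rid q = {0} ↔ IsUnit (1 - p * q) := by
  constructor
  · intro h
    have lcancel : ∀ x : R, (1 - p * q) * x = 0 → x = 0 := by
      intro x hx
      obtain ⟨h1, h2⟩ := ker_sub_aux hred hp hq hx
      have hmem : x ∈ rid p ∩ rid q := ⟨⟨x, h1.symm⟩, ⟨x, h2.symm⟩⟩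
      rw [h] at hmem
      exact hmem
    have rcancel : ∀ x : R, x * (1 - p * q) = 0 → x = 0 := by
      intro x hx
      have hx' : (1 - q * p) * star x = 0 := by
        have := congrArg star hx
        rw [star_mul, star_sub, star_one, star_mul, hp.2, hq.2, star_zero] at this
        exact this
      obtain ⟨h1, h2⟩ := ker_sub_aux hred hq hp hx'
      have hmem : star x ∈ rid p ∩ rid q := ⟨⟨star x, h2.symm⟩, ⟨star x, h1.symm⟩⟩
      rw [h] at hmem
      have hsx : star x = 0 := hmem
      have := congrArg star hsx
      rwa [star_star, star_zero] at this
    obtain ⟨haca, -, -, -⟩ := hc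
    have hca : c * (1 - p * q) = 1 := by
      have e : (1 - p * q) * (c * (1 - p * q) - 1) = 0 := by
        have : (1 - p * q) * (c * (1 - p * q) - 1)
            = (1 - p * q) * c * (1 - p * q) - (1 - p * q) := by noncomm_ring
        rw [this, haca, sub_self]
      have := lcancel _ e
      exact sub_eq_zero.mp this
    have hac : (1 - p * q) * c = 1 := by
      have e : ((1 - p * q) * c - 1) * (1 - p * q) = 0 := by
        have : ((1 - p * q) * c - 1) * (1 - p * q)
            = (1 - p * q) * c * (1 - p * q) - (1 - p * q) := by noncomm_ring
        rw [this, haca, sub_self]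
      have := rcancel _ e
      exact sub_eq_zero.mp this
    exact ⟨⟨1 - p * q, c, hac, hca⟩, rfl⟩
  · intro hu
    obtain ⟨u, hu'⟩ := hu
    ext x
    simp only [Set.mem_inter_iff, Set.mem_singleton_iff]
    constructor
    · rintro ⟨⟨r, hr⟩, ⟨s, hs⟩⟩
      have hpx : p * x = x := by rw [hr, ← mul_assoc, hp.1]
      have hqx : q * x = x := by rw [hs, ← mul_assoc, hq.1]
      have hz : (1 - p * q) * x = 0 := by
        rw [sub_mul, one_mul, mul_assoc, hqx, hpx, sub_self]
      calc x = ↑u⁻¹ * (↑u * x) := by rw [← mul_assoc, u.inv_mul, one_mul]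
        _ = 0 := by rw [hu', hz, mul_zero]
    · rintro rfl
      exact ⟨⟨0, by simp⟩, ⟨0, by simp⟩⟩
end

section
/- Let p and q be projections in a *-reducing ring R such that 1 - qp is Moore-Penrose invertible. Then (1-qp)†(1-q) and p(p+q-qp)† are idempotents. Moreover (1 - (1-qp)†(1-q))R = qR and (p(p+q-qp)†)R = pR. -/
variable {R : Type*} [Ring R] [StarRing R]

/-- Key lemma: if `p, q` are projections and `c` is an inner inverse of `1 - q*p`,
then `(1-p)*c*(1-p) = 1-p`. -/
lemma key_lemma17 (hred : ∀ a : R, star a * a = 0 → a = 0)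
    (p q c : R) (hp : IsProj p) (hq : IsProj q)
    (h1 : (1 - q * p) * c * (1 - q * p) = 1 - q * p) :
    (1 - p) * c * (1 - p) = 1 - p := by
  obtain ⟨hp1, hp2⟩ := hp
  obtain ⟨hq1, hq2⟩ := hq
  have hA : (1 - q * p) * (1 - p) = 1 - p := by
    have h : (1 - q * p) * (1 - p) = 1 - p - q * p + q * (p * p) := by noncomm_ring
    rw [h, hp1]; noncomm_ring
  have hB : (1 - q * p) * c * (1 - p) = 1 - p := by
    calc (1 - q * p) * c * (1 - p)
        = (1 - q * p) * c * ((1 - q * p) * (1 - p)) := by rw [hA]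
      _ = (1 - q * p) * c * (1 - q * p) * (1 - p) := by noncomm_ring
      _ = (1 - q * p) * (1 - p) := by rw [h1]
      _ = 1 - p := hA
  have hx : (1 - p) - (1 - p) * c * (1 - p) = ((1 - q) * p) * (c * (1 - p)) := by
    calc (1 - p) - (1 - p) * c * (1 - p)
        = (1 - q * p) * c * (1 - p) - (1 - p) * c * (1 - p) := by rw [hB]
      _ = ((1 - q) * p) * (c * (1 - p)) := by noncomm_ring
  have hpx : p * ((1 - p) - (1 - p) * c * (1 - p)) = 0 := by
    have h0 : p * (1 - p) = 0 := by rw [mul_sub, mul_one, hp1, sub_self]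
    calc p * ((1 - p) - (1 - p) * c * (1 - p))
        = p * (1 - p) - p * (1 - p) * c * (1 - p) := by noncomm_ring
      _ = 0 := by rw [h0]; noncomm_ring
  have hpx' : p * (((1 - q) * p) * (c * (1 - p))) = 0 := by rw [← hx]; exact hpx
  have hstarm : star ((1 - q) * p) = p * (1 - q) := by
    rw [star_mul, hp2, star_sub, star_one, hq2]
  have hq' : (1 - q) * ((1 - q) * p) = (1 - q) * p := by
    have h : (1 - q) * ((1 - q) * p) = (1 - q) * p - q * p + q * (q * p) := by noncomm_ring
    have h' : q * (q * p) = q * p := by rw [← mul_assoc, hq1]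
    rw [h, h']; noncomm_ring
  have hxx : star ((1 - p) - (1 - p) * c * (1 - p)) * ((1 - p) - (1 - p) * c * (1 - p)) = 0 := by
    calc star ((1 - p) - (1 - p) * c * (1 - p)) * ((1 - p) - (1 - p) * c * (1 - p))
        = (star (c * (1 - p)) * star ((1 - q) * p)) * (((1 - q) * p) * (c * (1 - p))) := by
          rw [hx, star_mul]
      _ = star (c * (1 - p)) * ((p * ((1 - q) * ((1 - q) * p))) * (c * (1 - p))) := by
          rw [hstarm]; noncomm_ring
      _ = star (c * (1 - p)) * ((p * ((1 - q) * p)) * (c * (1 - p))) := by rw [hq']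
      _ = star (c * (1 - p)) * (p * (((1 - q) * p) * (c * (1 - p)))) := by noncomm_ring
      _ = 0 := by rw [hpx', mul_zero]
  have hz := hred _ hxx
  have h := sub_eq_zero.mp hz
  exact h.symm

theorem stmt17 (hred : ∀ a : R, star a * a = 0 → a = 0)
    (p q c e : R) (hp : IsProj p) (hq : IsProj q)
    (hc : IsMP (1 - q * p) c) (he : IsMP (p + q - q * p) e) :
    (c * (1 - q)) * (c * (1 - q)) = c * (1 - q) ∧
    (p * e) * (p * e) = p * e ∧
    rid (1 - c * (1 - q)) = rid q ∧
    rid (p * e) = rid p := by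
  obtain ⟨hc1, hc2, hc3, hc4⟩ := hc
  obtain ⟨he1, he2, he3, he4⟩ := he
  -- star of a = 1 - q*p
  have hstar_a : star ((1 : R) - q * p) = 1 - p * q := by
    rw [star_sub, star_one, star_mul, hp.2, hq.2]
  have h1' : (1 - p * q) * star c * (1 - p * q) = 1 - p * q := by
    have h := congrArg star hc1
    simp only [star_mul, hstar_a] at h
    rw [← mul_assoc] at h
    exact h
  have hqcq' : (1 - q) * star c * (1 - q) = 1 - q :=
    key_lemma17 hred q p (star c) hq hp h1'
  have hqcq : (1 - q) * c * (1 - q) = 1 - q := by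
    have h := congrArg star hqcq'
    simp only [star_mul, star_sub, star_one, hq.2, star_star] at h
    rw [← mul_assoc] at h
    exact h
  -- the b part
  have hb : p + q - q * p = 1 - (1 - q) * (1 - p) := by noncomm_ring
  have hprojp' : IsProj ((1 : R) - p) := by
    constructor
    · have h : ((1 : R) - p) * (1 - p) = 1 - p - p + p * p := by noncomm_ring
      rw [h, hp.1]; noncomm_ring
    · rw [star_sub, star_one, hp.2]
  have hprojq' : IsProj ((1 : R) - q) := by
    constructor
    · have h : ((1 : R) - q) * (1 - q) = 1 - q - q + q * q := by noncomm_ring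
      rw [h, hq.1]; noncomm_ring
    · rw [star_sub, star_one, hq.2]
  have hb1 : (1 - (1 - q) * (1 - p)) * e * (1 - (1 - q) * (1 - p)) = 1 - (1 - q) * (1 - p) := by
    rw [← hb]; exact he1
  have hpep' := key_lemma17 hred (1 - p) (1 - q) e hprojp' hprojq' hb1
  have hcanc : (1 : R) - (1 - p) = p := sub_sub_cancel 1 p
  rw [hcanc] at hpep'
  -- hpep' : p * e * p = p
  refine ⟨?_, ?_, ?_, ?_⟩
  · calc (c * (1 - q)) * (c * (1 - q)) = c * ((1 - q) * c * (1 - q)) := by noncomm_ring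
      _ = c * (1 - q) := by rw [hqcq]
  · calc (p * e) * (p * e) = (p * e * p) * e := by noncomm_ring
      _ = p * e := by rw [hpep']
  · have h5 : q * (1 - c * (1 - q)) = 1 - c * (1 - q) := by
      have h6 : (1 - q) * (1 - c * (1 - q)) = 0 := by
        calc (1 - q) * (1 - c * (1 - q)) = (1 - q) - (1 - q) * c * (1 - q) := by noncomm_ring
          _ = 0 := by rw [hqcq, sub_self]
      have h7 : q * (1 - c * (1 - q))
          = (1 - c * (1 - q)) - (1 - q) * (1 - c * (1 - q)) := by noncomm_ring
      rw [h7, h6, sub_zero]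
    have h8 : (1 - c * (1 - q)) * q = q := by
      have h9 : ((1 : R) - q) * q = 0 := by rw [sub_mul, one_mul, hq.1, sub_self]
      have h10 : (1 - c * (1 - q)) * q = q - c * (((1 : R) - q) * q) := by noncomm_ring
      rw [h10, h9, mul_zero, sub_zero]
    ext x
    constructor
    · rintro ⟨r, rfl⟩
      exact ⟨(1 - c * (1 - q)) * r, by rw [← mul_assoc, h5]⟩
    · rintro ⟨r, rfl⟩
      exact ⟨q * r, by rw [← mul_assoc, h8]⟩
  · ext x
    constructor
    · rintro ⟨r, rfl⟩
      exact ⟨e * r, by rw [mul_assoc]⟩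
    · rintro ⟨r, rfl⟩
      exact ⟨p * r, by rw [← mul_assoc, hpep']⟩
end

section
/- Let p and q be projections in a *-reducing ring R such that 1 - qp is Moore-Penrose invertible. Then: (1) ((1-q)p)† = (1-qp)†(1-q) if and only if pR + qR = R; (2) ((1-q)p)† = p(p+q-qp)† if and only if pR ∩ qR = {0}; (3) (1-qp)†(1-q) = p(p+q-qp)† if and only if pR ⊕ qR = R (i.e., pR + qR = R and pR ∩ qR = {0}). -/
variable {R : Type*} [Ring R] [StarRing R]

/-! ### Auxiliary lemmas -/

lemma st18_mp_unique {a b b' : R} (hb : IsMP a b) (hb' : IsMP a b') : b = b' := by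
  obtain ⟨h1, h2, h3, h4⟩ := hb
  obtain ⟨h1', h2', h3', h4'⟩ := hb'
  have sA' : star a = star a * (a * b') := by
    conv_lhs => rw [← h1']
    rw [star_mul, h3']
  have e1 : a * b = a * b' := by
    calc a * b = star (a * b) := h3.symm
      _ = star b * star a := by rw [star_mul]
      _ = star b * (star a * (a * b')) := by rw [← sA']
      _ = (star b * star a) * (a * b') := by rw [← mul_assoc]
      _ = star (a * b) * (a * b') := by rw [star_mul]
      _ = (a * b) * (a * b') := by rw [h3]
      _ = (a * b * a) * b' := by noncomm_ring
      _ = a * b' := by rw [h1]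
  have sA2 : star a = (b' * a) * star a := by
    conv_lhs => rw [← h1']
    rw [show a * b' * a = a * (b' * a) from by noncomm_ring, star_mul, h4']
  have e2 : b * a = b' * a := by
    calc b * a = star (b * a) := h4.symm
      _ = star a * star b := by rw [star_mul]
      _ = ((b' * a) * star a) * star b := by rw [← sA2]
      _ = (b' * a) * (star a * star b) := by rw [mul_assoc]
      _ = (b' * a) * star (b * a) := by rw [star_mul]
      _ = (b' * a) * (b * a) := by rw [h4]
      _ = b' * (a * b * a) := by noncomm_ring
      _ = b' * a := by rw [h1]
  calc b = b * a * b := h2.symm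
    _ = (b' * a) * b := by rw [e2]
    _ = b' * (a * b) := by rw [mul_assoc]
    _ = b' * (a * b') := by rw [e1]
    _ = b' * a * b' := by rw [← mul_assoc]
    _ = b' := h2'

lemma st18_mp_star {a b : R} (h : IsMP a b) : IsMP (star a) (star b) := by
  obtain ⟨h1, h2, h3, h4⟩ := h
  refine ⟨?_, ?_, ?_, ?_⟩
  · calc star a * star b * star a = star (a * (b * a)) := by rw [← star_mul, ← star_mul]
      _ = star a := by rw [← mul_assoc, h1]
  · calc star b * star a * star b = star (b * (a * b)) := by rw [← star_mul, ← star_mul]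
      _ = star b := by rw [← mul_assoc, h2]
  · rw [← star_mul, star_star, h4]
  · rw [← star_mul, star_star, h3]

lemma st18_projc {P : R} (hP : IsProj P) : IsProj (1 - P) := by
  constructor
  · calc ((1:R) - P) * (1 - P) = 1 - P - P + P * P := by noncomm_ring
      _ = 1 - P := by rw [hP.1]; noncomm_ring
  · rw [star_sub, star_one, hP.2]

lemma st18_sqc {Q : R} (hQ : IsProj Q) : ((1:R) - Q) * (1 - Q) = 1 - Q := by
  calc ((1:R) - Q) * (1 - Q) = 1 - Q - Q + Q * Q := by noncomm_ring
    _ = 1 - Q := by rw [hQ.1]; noncomm_ring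

lemma st18_bQA {Q P : R} (hQ : IsProj Q) : Q * ((1 - Q) * P) = 0 := by
  calc Q * ((1 - Q) * P) = (Q - Q * Q) * P := by noncomm_ring
    _ = 0 := by rw [hQ.1, sub_self, zero_mul]

lemma st18_bFP {Q P : R} (hP : IsProj P) : (1 - Q * P) * P = (1 - Q) * P := by
  calc (1 - Q * P) * P = P - Q * (P * P) := by noncomm_ring
    _ = P - Q * P := by rw [hP.1]
    _ = (1 - Q) * P := by noncomm_ring

lemma st18_bFCA {Q P C : R} (hP : IsProj P) (hC : IsMP (1 - Q * P) C) :
    (1 - Q * P) * C * ((1 - Q) * P) = (1 - Q) * P := by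
  calc (1 - Q * P) * C * ((1 - Q) * P)
      = (1 - Q * P) * C * (1 - Q * P) * P := by rw [← st18_bFP hP]; noncomm_ring
    _ = (1 - Q * P) * P := by rw [hC.1]
    _ = (1 - Q) * P := st18_bFP hP

lemma st18_sACF {Q P C : R} (hP : IsProj P) (hQ : IsProj Q) (hC : IsMP (1 - Q * P) C) :
    P * (1 - Q) * ((1 - Q * P) * C) = P * (1 - Q) := by
  have h0 := congrArg star (st18_bFCA hP hC)
  rw [star_mul, star_mul, hC.2.2.1, star_sub, star_one, hQ.2, hP.2] at h0
  exact h0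

lemma st18_pda {P Q D : R} (hP : IsProj P) (hD : IsMP ((1 - Q) * P) D) :
    P * (D * ((1 - Q) * P)) = D * ((1 - Q) * P) := by
  have g1a : D * ((1 - Q) * P) * P = D * ((1 - Q) * P) := by
    calc D * ((1 - Q) * P) * P = D * ((1 - Q) * (P * P)) := by noncomm_ring
      _ = D * ((1 - Q) * P) := by rw [hP.1]
  have h0 : star (D * ((1 - Q) * P) * P) = P * (D * ((1 - Q) * P)) := by
    rw [star_mul, hP.2, hD.2.2.2]
  rw [← h0, g1a, hD.2.2.2]

lemma st18_pd {P Q D : R} (hP : IsProj P) (hD : IsMP ((1 - Q) * P) D) : P * D = D := by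
  calc P * D = P * (D * ((1 - Q) * P) * D) := by rw [hD.2.1]
    _ = P * (D * ((1 - Q) * P)) * D := by noncomm_ring
    _ = D * ((1 - Q) * P) * D := by rw [st18_pda hP hD]
    _ = D := hD.2.1

lemma st18_dq {P Q D : R} (hQ : IsProj Q) (hD : IsMP ((1 - Q) * P) D) : D * Q = 0 := by
  have e0 : Q * ((1 - Q) * P * D) = 0 := by
    calc Q * ((1 - Q) * P * D) = (Q - Q * Q) * (P * D) := by noncomm_ring
      _ = 0 := by rw [hQ.1, sub_self, zero_mul]
  have e1 : (1 - Q) * P * D * Q = 0 := by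
    have h0 := congrArg star e0
    rw [star_mul, hQ.2, hD.2.2.1, star_zero] at h0
    exact h0
  calc D * Q = (D * ((1 - Q) * P) * D) * Q := by rw [hD.2.1]
    _ = D * ((1 - Q) * P * D * Q) := by noncomm_ring
    _ = 0 := by rw [e1, mul_zero]

/-- The key "Z" lemma: if `x = C (1-Q)` and `P x = x`, then `(1-Q)P x = 1-Q`. -/
lemma st18_lemZ {P Q C : R} (hP : IsProj P) (hQ : IsProj Q)
    (hC : IsMP (1 - Q * P) C) {x : R}
    (hx1 : x = C * (1 - Q)) (hx2 : P * x = x) : (1 - Q) * P * x = 1 - Q := by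
  have s1 : (1 - Q) * P * x = (1 - Q * P) * x := by
    calc (1 - Q) * P * x = (1 - Q * P) * x + (P * x - x) := by noncomm_ring
      _ = (1 - Q * P) * x + (x - x) := by rw [hx2]
      _ = (1 - Q * P) * x := by noncomm_ring
  have s0 : (1 - Q) * P * x = (1 - Q * P) * C * (1 - Q) := by
    rw [s1, hx1]; noncomm_ring
  obtain ⟨z, hzd⟩ : ∃ z' : R, z' = (1 - Q) - (1 - Q) * P * x := ⟨_, rfl⟩
  have sQz : Q * z = 0 := by
    rw [hzd]
    calc Q * ((1 - Q) - (1 - Q) * P * x)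
        = (Q - Q * Q) - (Q * ((1 - Q) * P)) * x := by noncomm_ring
      _ = (Q - Q * Q) - 0 * x := by rw [st18_bQA hQ]
      _ = 0 := by rw [hQ.1, sub_self, zero_mul, sub_zero]
  have sAz : P * (1 - Q) * z = 0 := by
    rw [hzd]
    calc P * (1 - Q) * ((1 - Q) - (1 - Q) * P * x)
        = P * ((1 - Q) * (1 - Q)) - P * (1 - Q) * ((1 - Q) * P * x) := by noncomm_ring
      _ = P * (1 - Q) - P * (1 - Q) * ((1 - Q) * P * x) := by rw [st18_sqc hQ]
      _ = P * (1 - Q) - P * (1 - Q) * ((1 - Q * P) * C * (1 - Q)) := by rw [s0]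
      _ = P * (1 - Q) - (P * (1 - Q) * ((1 - Q * P) * C)) * (1 - Q) := by noncomm_ring
      _ = P * (1 - Q) - (P * (1 - Q)) * (1 - Q) := by rw [st18_sACF hP hQ hC]
      _ = P * (1 - Q) - P * ((1 - Q) * (1 - Q)) := by noncomm_ring
      _ = P * (1 - Q) - P * (1 - Q) := by rw [st18_sqc hQ]
      _ = 0 := sub_self _
  have sPz : P * z = 0 := by
    calc P * z = P * (1 - Q) * z + P * (Q * z) := by noncomm_ring
      _ = 0 := by rw [sAz, sQz, mul_zero, add_zero]
  have sFz : (1 - Q * P) * z = z := by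
    have e0 : (1 - Q * P) * z = z - Q * (P * z) := by noncomm_ring
    rw [e0, sPz, mul_zero, sub_zero]
  have s6 : (1 - Q * P) * C * z = z := by
    calc (1 - Q * P) * C * z = (1 - Q * P) * C * ((1 - Q * P) * z) := by rw [sFz]
      _ = ((1 - Q * P) * C * (1 - Q * P)) * z := by noncomm_ring
      _ = (1 - Q * P) * z := by rw [hC.1]
      _ = z := sFz
  have s7 : (1 - Q * P) * C * z = 0 := by
    rw [hzd]
    calc (1 - Q * P) * C * ((1 - Q) - (1 - Q) * P * x)
        = (1 - Q * P) * C * (1 - Q) - (1 - Q * P) * C * ((1 - Q) * P * x) := by noncomm_ring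
      _ = (1 - Q * P) * C * (1 - Q)
          - (1 - Q * P) * C * ((1 - Q * P) * C * (1 - Q)) := by rw [s0]
      _ = (1 - Q * P) * C * (1 - Q)
          - ((1 - Q * P) * C * (1 - Q * P)) * (C * (1 - Q)) := by noncomm_ring
      _ = (1 - Q * P) * C * (1 - Q) - (1 - Q * P) * (C * (1 - Q)) := by rw [hC.1]
      _ = 0 := by noncomm_ring
  have hz0 : z = 0 := s6.symm.trans s7
  rw [hzd] at hz0
  exact (sub_eq_zero.mp hz0).symm

/-- General fact: `C (1-QP) D = D`. Needs the *-reducing hypothesis. -/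
lemma st18_lemG3 (hred : ∀ a : R, star a * a = 0 → a = 0) {P Q C D : R}
    (hP : IsProj P) (hQ : IsProj Q)
    (hC : IsMP (1 - Q * P) C) (hD : IsMP ((1 - Q) * P) D) :
    C * ((1 - Q * P) * D) = D := by
  obtain ⟨h, hh_def⟩ : ∃ h' : R, h' = D - C * ((1 - Q * P) * D) := ⟨_, rfl⟩
  have t1 : (1 - Q * P) * h = 0 := by
    rw [hh_def]
    calc (1 - Q * P) * (D - C * ((1 - Q * P) * D))
        = (1 - Q * P) * D - (1 - Q * P) * C * (1 - Q * P) * D := by noncomm_ring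
      _ = (1 - Q * P) * D - (1 - Q * P) * D := by rw [hC.1]
      _ = 0 := sub_self _
  have t2 : h = Q * (P * h) := by
    have e0 : h - Q * (P * h) = (1 - Q * P) * h := by noncomm_ring
    exact sub_eq_zero.mp (e0.trans t1)
  have t3 : Q * h = h := by
    calc Q * h = Q * (Q * (P * h)) := by rw [← t2]
      _ = (Q * Q) * (P * h) := by noncomm_ring
      _ = Q * (P * h) := by rw [hQ.1]
      _ = h := t2.symm
  have t4 : star h * Q = star h := by
    have h0 := congrArg star t3
    rw [star_mul, hQ.2] at h0
    exact h0
  have t5 : star ((1 - P) * h) * ((1 - P) * h) = 0 := by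
    have e2 : star h * h = star h * (P * h) := by
      calc star h * h = star h * (Q * (P * h)) := by rw [← t2]
        _ = (star h * Q) * (P * h) := by noncomm_ring
        _ = star h * (P * h) := by rw [t4]
    rw [star_mul, star_sub, star_one, hP.2]
    calc (star h * (1 - P)) * ((1 - P) * h)
        = star h * h - star h * (P * h)
          - (star h * (P * h) - star h * ((P * P) * h)) := by noncomm_ring
      _ = star h * h - star h * (P * h)
          - (star h * (P * h) - star h * (P * h)) := by rw [hP.1]
      _ = star h * h - star h * (P * h) := by noncomm_ring
      _ = 0 := by rw [e2, sub_self]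
  have t6 : (1 - P) * h = 0 := hred _ t5
  have tP : P * h = h := by
    have e0 : h - P * h = (1 - P) * h := by noncomm_ring
    exact (sub_eq_zero.mp (e0.trans t6)).symm
  have t7 : (1 - Q) * P * h = 0 := by
    calc (1 - Q) * P * h = (1 - Q) * (P * h) := by noncomm_ring
      _ = (1 - Q) * h := by rw [tP]
      _ = h - Q * h := by noncomm_ring
      _ = 0 := by rw [t3, sub_self]
  have t8 : star D * (D * ((1 - Q) * P)) = star D := by
    have h0 := congrArg star hD.2.1
    rw [star_mul, hD.2.2.2] at h0
    exact h0
  have hCsC : star C * (C * (1 - Q * P)) = star C := by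
    have h0 := congrArg star hC.2.1
    rw [star_mul, hC.2.2.2] at h0
    exact h0
  have t9 : star C * h = 0 := by
    calc star C * h = (star C * (C * (1 - Q * P))) * h := by rw [hCsC]
      _ = star C * (C * ((1 - Q * P) * h)) := by noncomm_ring
      _ = 0 := by rw [t1, mul_zero, mul_zero]
  have t10 : star h * h = star D * h := by
    have z1 : star (C * ((1 - Q * P) * D)) * h = 0 := by
      rw [star_mul, mul_assoc, t9, mul_zero]
    have e3 : star h = star D - star (C * ((1 - Q * P) * D)) := by
      rw [hh_def, star_sub]
    calc star h * h = (star D - star (C * ((1 - Q * P) * D))) * h := by rw [e3]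
      _ = star D * h - star (C * ((1 - Q * P) * D)) * h := by noncomm_ring
      _ = star D * h := by rw [z1, sub_zero]
  have t11 : star D * h = 0 := by
    calc star D * h = (star D * (D * ((1 - Q) * P))) * h := by rw [t8]
      _ = (star D * D) * ((1 - Q) * P * h) := by noncomm_ring
      _ = 0 := by rw [t7, mul_zero]
  have hz0 : h = 0 := hred _ (t10.trans t11)
  rw [hh_def] at hz0
  exact (sub_eq_zero.mp hz0).symm

/-- If `(1-Q)PD = 1-Q` then `D = C(1-Q)`. -/
lemma st18_lemL4 (hred : ∀ a : R, star a * a = 0 → a = 0) {P Q C D : R}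
    (hP : IsProj P) (hQ : IsProj Q)
    (hC : IsMP (1 - Q * P) C) (hD : IsMP ((1 - Q) * P) D)
    (hAD : (1 - Q) * P * D = 1 - Q) : D = C * (1 - Q) := by
  calc D = C * ((1 - Q * P) * D) := (st18_lemG3 hred hP hQ hC hD).symm
    _ = C * ((1 - Q * P) * (P * D)) := by rw [st18_pd hP hD]
    _ = C * ((1 - Q * P) * P * D) := by noncomm_ring
    _ = C * ((1 - Q) * P * D) := by rw [st18_bFP hP]
    _ = C * (1 - Q) := by rw [hAD]

theorem stmt18 (hred : ∀ a : R, star a * a = 0 → a = 0)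
    (p q c d e : R) (hp : IsProj p) (hq : IsProj q)
    (hc : IsMP (1 - q * p) c) (hd : IsMP ((1 - q) * p) d)
    (he : IsMP (p + q - q * p) e) :
    (d = c * (1 - q) ↔ sid (rid p) (rid q) = Set.univ) ∧
    (d = p * e ↔ rid p ∩ rid q = {0}) ∧
    (c * (1 - q) = p * e ↔ (sid (rid p) (rid q) = Set.univ ∧ rid p ∩ rid q = {0})) := by
  have hpp : (1:R) - (1 - p) = p := sub_sub_cancel 1 p
  have hP' : IsProj (1 - q) := st18_projc hq
  have hQ' : IsProj (1 - p) := st18_projc hp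
  have hd' : IsMP ((1 - (1 - p)) * (1 - q)) (star d) := by
    have h0 := st18_mp_star hd
    have e0 : star ((1 - q) * p) = (1 - (1 - p)) * (1 - q) := by
      rw [star_mul, star_sub, star_one, hp.2, hq.2, hpp]
    rw [e0] at h0
    exact h0
  have he' : IsMP (1 - (1 - p) * (1 - q)) (star e) := by
    have h0 := st18_mp_star he
    have e0 : star (p + q - q * p) = 1 - (1 - p) * (1 - q) := by
      rw [star_sub, star_add, star_mul, hp.2, hq.2]
      noncomm_ring
    rw [e0] at h0
    exact h0
  have F1 : p * d = d := st18_pd hp hd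
  have F2 : d * q = 0 := st18_dq hq hd
  have hdq1 : d * (1 - q) = d := by
    calc d * (1 - q) = d - d * q := by noncomm_ring
      _ = d := by rw [F2, sub_zero]
  have keyA : d = c * (1 - q) ↔ (1 - q) * p * d = 1 - q := by
    constructor
    · intro h
      exact st18_lemZ hp hq hc h F1
    · intro h
      exact st18_lemL4 hred hp hq hc hd h
  have keyB : d = p * e ↔ d * ((1 - q) * p) = p := by
    constructor
    · intro h
      have hx1 : star d = star e * (1 - (1 - p)) := by
        rw [h, star_mul, hp.2, hpp]
      have hx2 : (1 - q) * star d = star d := by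
        have h0 := congrArg star hdq1
        rw [star_mul, star_sub, star_one, hq.2] at h0
        exact h0
      have h9 := st18_lemZ hP' hQ' he' hx1 hx2
      rw [hpp] at h9
      have h10 := congrArg star h9
      rw [star_mul, star_star, star_mul, star_sub, star_one, hq.2, hp.2] at h10
      exact h10
    · intro h
      have h0 := congrArg star h
      rw [star_mul, star_mul, star_sub, star_one, hq.2, hp.2] at h0
      have hAD' : (1 - (1 - p)) * (1 - q) * star d = 1 - (1 - p) := by
        rw [hpp]; exact h0
      have h1 := st18_lemL4 hred hP' hQ' he' hd' hAD'
      have h2 := congrArg star h1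
      rw [star_star, star_mul, star_star, star_sub, star_one, star_sub, star_one,
        hp.2, hpp] at h2
      exact h2
  have key1 : (1 - q) * p * d = 1 - q ↔ sid (rid p) (rid q) = Set.univ := by
    constructor
    · intro h
      apply Set.eq_univ_of_forall
      intro z
      have h16 : (1 - q) * d = 1 - q := by
        calc (1 - q) * d = (1 - q) * (p * d) := by rw [F1]
          _ = (1 - q) * p * d := by rw [mul_assoc]
          _ = 1 - q := h
      refine ⟨p * (d * z), ⟨d * z, rfl⟩, q * (z - d * z), ⟨z - d * z, rfl⟩, ?_⟩
      have e0 : p * (d * z) + q * (z - d * z) = z := by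
        calc p * (d * z) + q * (z - d * z)
            = (p * d) * z + q * z - q * (d * z) := by noncomm_ring
          _ = d * z + q * z - q * (d * z) := by rw [F1]
          _ = ((1 - q) * d) * z + q * z := by noncomm_ring
          _ = (1 - q) * z + q * z := by rw [h16]
          _ = z := by noncomm_ring
      exact e0.symm
    · intro hsid
      have h1 : (1:R) ∈ sid (rid p) (rid q) := by rw [hsid]; trivial
      obtain ⟨xx, ⟨u, hu⟩, yy, ⟨v, hv⟩, h1eq⟩ := h1
      have hone : (1:R) = p * u + q * v := by rw [h1eq, hu, hv]
      have h1q : (1:R) - q = (1 - q) * p * u := by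
        calc (1:R) - q = (1 - q) * (p * u + q * v) := by rw [← hone, mul_one]
          _ = (1 - q) * p * u + (q - q * q) * v := by noncomm_ring
          _ = (1 - q) * p * u := by rw [hq.1, sub_self, zero_mul, add_zero]
      have e5 : ((1 - q) * p * d) * ((1 - q) * p * u) = (1 - q) * p * u := by
        calc ((1 - q) * p * d) * ((1 - q) * p * u)
            = ((1 - q) * p * d * ((1 - q) * p)) * u := by noncomm_ring
          _ = ((1 - q) * p) * u := by rw [hd.1]
          _ = (1 - q) * p * u := by noncomm_ring
      calc (1 - q) * p * d
          = ((1 - q) * p * d) * (1 - q) + ((1 - q) * p) * (d * q) := by noncomm_ring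
        _ = ((1 - q) * p * d) * (1 - q) := by rw [F2, mul_zero, add_zero]
        _ = ((1 - q) * p * d) * ((1 - q) * p * u) := by rw [← h1q]
        _ = (1 - q) * p * u := e5
        _ = 1 - q := h1q.symm
  have key2 : d * ((1 - q) * p) = p ↔ rid p ∩ rid q = {0} := by
    constructor
    · intro hDA
      rw [Set.eq_singleton_iff_unique_mem]
      constructor
      · exact ⟨⟨0, (mul_zero p).symm⟩, ⟨0, (mul_zero q).symm⟩⟩
      · rintro x ⟨⟨r1, hr1⟩, ⟨s1, hs1⟩⟩
        have hpx : p * x = x := by rw [hr1, ← mul_assoc, hp.1]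
        have hqx : q * x = x := by rw [hs1, ← mul_assoc, hq.1]
        have hax : (1 - q) * p * x = 0 := by
          calc (1 - q) * p * x = p * x - q * (p * x) := by noncomm_ring
            _ = x - q * x := by rw [hpx]
            _ = 0 := by rw [hqx, sub_self]
        calc x = p * x := hpx.symm
          _ = (d * ((1 - q) * p)) * x := by rw [hDA]
          _ = d * ((1 - q) * p * x) := by noncomm_ring
          _ = 0 := by rw [hax, mul_zero]
    · intro hint
      have g1b := st18_pda hp hd
      have hpz : p * (p - d * ((1 - q) * p)) = p - d * ((1 - q) * p) := by
        calc p * (p - d * ((1 - q) * p))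
            = p * p - p * (d * ((1 - q) * p)) := by noncomm_ring
          _ = p - d * ((1 - q) * p) := by rw [hp.1, g1b]
      have hAz : (1 - q) * p * (p - d * ((1 - q) * p)) = 0 := by
        calc (1 - q) * p * (p - d * ((1 - q) * p))
            = (1 - q) * (p * p) - (1 - q) * p * d * ((1 - q) * p) := by noncomm_ring
          _ = (1 - q) * p - (1 - q) * p := by rw [hp.1, hd.1]
          _ = 0 := sub_self _
      have hqz : q * (p - d * ((1 - q) * p)) = p - d * ((1 - q) * p) := by
        have e0 : (1 - q) * (p - d * ((1 - q) * p)) = 0 := by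
          calc (1 - q) * (p - d * ((1 - q) * p))
              = (1 - q) * (p * (p - d * ((1 - q) * p))) := by rw [hpz]
            _ = (1 - q) * p * (p - d * ((1 - q) * p)) := by noncomm_ring
            _ = 0 := hAz
        have e1 : (p - d * ((1 - q) * p)) - q * (p - d * ((1 - q) * p))
            = (1 - q) * (p - d * ((1 - q) * p)) := by noncomm_ring
        exact (sub_eq_zero.mp (e1.trans e0)).symm
      have hmem : (p - d * ((1 - q) * p)) ∈ rid p ∩ rid q :=
        ⟨⟨p - d * ((1 - q) * p), hpz.symm⟩, ⟨p - d * ((1 - q) * p), hqz.symm⟩⟩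
      rw [hint] at hmem
      have h00 : p - d * ((1 - q) * p) = 0 := hmem
      exact (sub_eq_zero.mp h00).symm
  refine ⟨keyA.trans key1, keyB.trans key2, ?_⟩
  constructor
  · intro h3
    have hx2 : p * (c * (1 - q)) = c * (1 - q) := by
      rw [h3, ← mul_assoc, hp.1]
    have hax : (1 - q) * p * (c * (1 - q)) = 1 - q := st18_lemZ hp hq hc rfl hx2
    have hstar3 : (1 - q) * star c = star e * (1 - (1 - p)) := by
      have h0 := congrArg star h3
      rw [star_mul, star_mul, star_sub, star_one, hq.2, hp.2, ← hpp] at h0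
      exact h0
    have hx2' : (1 - q) * (star e * (1 - (1 - p))) = star e * (1 - (1 - p)) := by
      rw [← hstar3, ← mul_assoc, st18_sqc hq]
    have h9 := st18_lemZ hP' hQ' he' rfl hx2'
    rw [hpp] at h9
    have h10 := congrArg star h9
    rw [star_mul, star_mul, star_star, star_mul, star_sub, star_one, hq.2, hp.2] at h10
    have hxa : (c * (1 - q)) * ((1 - q) * p) = p := by
      rw [h3]; exact h10
    have hMP : IsMP ((1 - q) * p) (c * (1 - q)) := by
      refine ⟨?_, ?_, ?_, ?_⟩
      · rw [hax, ← mul_assoc, st18_sqc hq]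
      · rw [hxa]; exact hx2
      · rw [hax, star_sub, star_one, hq.2]
      · rw [hxa, hp.2]
    have hdx : d = c * (1 - q) := st18_mp_unique hd hMP
    constructor
    · exact key1.mp (keyA.mp hdx)
    · apply key2.mp
      rw [hdx]; exact hxa
  · rintro ⟨hs1, hs2⟩
    have h1 : d = c * (1 - q) := keyA.mpr (key1.mpr hs1)
    have h2 : d = p * e := keyB.mpr (key2.mpr hs2)
    rw [← h1, ← h2]
end

section
/- Let p and q be projections in a *-ring R such that p(1-q) and (1-p)q are Moore-Penrose invertible. Then e = 1 - p(1-q)(p(1-q)p)† - (1-p)q((1-p)q(1-p))† is a projection and eR = (pR ∩ qR) + ((1-p)R ∩ (1-q)R), where the two summands are orthogonal: y*x = 0 for all x ∈ pR ∩ qR and y ∈ (1-p)R ∩ (1-q)R. -/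
variable {R : Type*} [Ring R] [StarRing R]

lemma mp_unique_s19 {a b₁ b₂ : R} (h₁ : IsMP a b₁) (h₂ : IsMP a b₂) : b₁ = b₂ := by
  obtain ⟨h11, h12, h13, h14⟩ := h₁
  obtain ⟨h21, h22, h23, h24⟩ := h₂
  have e1 : a * b₁ = a * b₂ := by
    calc a * b₁ = (a * b₂ * a) * b₁ := by rw [h21]
    _ = (a * b₂) * (a * b₁) := by rw [mul_assoc]
    _ = star (a * b₂) * star (a * b₁) := by rw [h23, h13]
    _ = star ((a * b₁) * (a * b₂)) := by rw [← star_mul]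
    _ = star ((a * b₁ * a) * b₂) := by congr 1; noncomm_ring
    _ = star (a * b₂) := by rw [h11]
    _ = a * b₂ := h23
  have e2 : b₁ * a = b₂ * a := by
    calc b₁ * a = b₁ * (a * b₂ * a) := by rw [h21]
    _ = (b₁ * a) * (b₂ * a) := by noncomm_ring
    _ = star (b₁ * a) * star (b₂ * a) := by rw [h24, h14]
    _ = star ((b₂ * a) * (b₁ * a)) := by rw [← star_mul]
    _ = star (b₂ * (a * b₁ * a)) := by congr 1; noncomm_ring
    _ = star (b₂ * a) := by rw [h11]
    _ = b₂ * a := h24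
  calc b₁ = b₁ * a * b₁ := h12.symm
  _ = b₁ * (a * b₂) := by rw [mul_assoc, e1]
  _ = (b₂ * a) * b₂ := by rw [← mul_assoc, e2]
  _ = b₂ := h22

lemma aux {p q u c : R} (hp : IsProj p) (hq : IsProj q)
    (hc : IsMP (p * (1 - q)) c) (hu : IsMP (p * (1 - q) * p) u) :
    (p * (1 - q) * u) * (p * (1 - q) * u) = p * (1 - q) * u ∧
    star (p * (1 - q) * u) = p * (1 - q) * u ∧
    p * (p * (1 - q) * u) = p * (1 - q) * u ∧
    (p * (1 - q) * u) * p = p * (1 - q) * u ∧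
    q * (p - p * (1 - q) * u) = p - p * (1 - q) * u ∧
    (∀ x, p * x = x → q * x = x → (p * (1 - q) * u) * x = 0) ∧
    (∀ y, p * y = 0 → (p * (1 - q) * u) * y = 0) := by
  obtain ⟨hp1, hp2⟩ := hp
  obtain ⟨hq1, hq2⟩ := hq
  set A := p * (1 - q) with hA
  set S := A * p with hS
  obtain ⟨hc1, hc2, hc3, hc4⟩ := hc
  obtain ⟨hu1, hu2, hu3, hu4⟩ := hu
  have hsq : star (1 - q) = 1 - q := by rw [star_sub, star_one, hq2]
  have h1q : (1 - q) * (1 - q) = 1 - q := by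
    calc (1 - q) * (1 - q) = 1 - q - q + q * q := by noncomm_ring
    _ = 1 - q := by rw [hq1]; abel
  have hpA : p * A = A := by rw [hA, ← mul_assoc, hp1]
  have hA1q : A * (1 - q) = A := by rw [hA, mul_assoc, h1q]
  have hsA : star A = (1 - q) * p := by rw [hA, star_mul, hsq, hp2]
  have hAsA : A * star A = S := by rw [hsA, ← mul_assoc, hA1q, hS]
  have hsAp : star A * p = star A := by rw [hsA, mul_assoc, hp1]
  have hSstar : star S = S := by
    rw [hS, star_mul, hp2, hsA, ← mul_assoc, ← hA]
  have E2 : star A * star c = c * A := by rw [← star_mul, hc4]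
  have hcAc' : c * (A * c) = c := by rw [← mul_assoc, hc2]
  have hsc : star c = A * c * star c := by
    conv_lhs => rw [← hcAc']
    rw [star_mul, hc3]
  have hpsc : p * star c = star c := by
    calc p * star c = p * (A * c * star c) := by rw [← hsc]
    _ = ((p * A) * c) * star c := by noncomm_ring
    _ = A * c * star c := by rw [hpA]
    _ = star c := by rw [← hsc]
  have hcsA : c = c * star c * star A := by
    conv_lhs => rw [← hcAc']
    rw [← hc3, star_mul, ← mul_assoc]
  have hcp : c * p = c := by
    conv_lhs => rw [hcsA]
    rw [mul_assoc, hsAp, ← hcsA]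
  have hkey : S * (star c * c) = A * c := by
    calc S * (star c * c) = A * ((star A * star c) * c) := by rw [← hAsA]; noncomm_ring
    _ = A * ((c * A) * c) := by rw [E2]
    _ = A * c := by rw [hc2]
  have hkey2 : (star c * c) * S = A * c := by
    have hh : star ((star c * c) * S) = A * c := by
      rw [star_mul, hSstar, star_mul, star_star, hkey]
    calc (star c * c) * S = star (star ((star c * c) * S)) := (star_star _).symm
    _ = star (A * c) := by rw [hh]
    _ = A * c := hc3
  have h_mp : IsMP S (star c * c) := by
    refine ⟨?_, ?_, ?_, ?_⟩
    · calc S * (star c * c) * S = (A * c) * (A * p) := by rw [hkey, hS]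
      _ = ((A * c) * A) * p := by noncomm_ring
      _ = A * p := by rw [hc1]
      _ = S := hS.symm
    · calc (star c * c) * S * (star c * c) = (star c * c) * (S * (star c * c)) := by rw [mul_assoc]
      _ = (star c * c) * (A * c) := by rw [hkey]
      _ = star c * (c * (A * c)) := by noncomm_ring
      _ = star c * c := by rw [hcAc']
    · rw [hkey]; exact hc3
    · rw [hkey2]; exact hc3
  have huval : u = star c * c := mp_unique_s19 ⟨hu1, hu2, hu3, hu4⟩ h_mp
  have hstaru : star u = u := by rw [huval, star_mul, star_star]
  have hpu : p * u = u := by rw [huval, ← mul_assoc, hpsc]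
  have hup : u * p = u := by rw [huval, mul_assoc, hcp]
  have hAuSu : A * u = S * u := by conv_rhs => rw [hS, mul_assoc, hpu]
  have hg : A * u = A * c := by rw [hAuSu, huval, hkey]
  have huS : u * S = S * u := by
    calc u * S = star (u * S) := hu4.symm
    _ = star S * star u := by rw [star_mul]
    _ = S * u := by rw [hSstar, hstaru]
  have hsA2 : star A = star A * (A * c) := by
    conv_lhs => rw [← hc1]
    rw [star_mul, hc3]
  have hsAA : star A * A = (1 - q) * A := by rw [hsA, mul_assoc, hpA]
  refine ⟨?_, ?_, ?_, ?_, ?_, ?_, ?_⟩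
  · rw [hAuSu]
    calc (S * u) * (S * u) = (S * u * S) * u := by noncomm_ring
    _ = S * u := by rw [hu1]
  · rw [hAuSu]; exact hu3
  · rw [← mul_assoc, hpA]
  · rw [mul_assoc, hup]
  · have hqA : (1 - q) * (A * u) = (1 - q) * p := by
      rw [hg]
      calc (1 - q) * (A * c) = ((1 - q) * A) * c := by noncomm_ring
      _ = (star A * A) * c := by rw [← hsAA]
      _ = star A * (A * c) := by rw [mul_assoc]
      _ = star A := by rw [← hsA2]
      _ = (1 - q) * p := hsA
    have hexp : q * (p - A * u) = (p - A * u) - ((1 - q) * p - (1 - q) * (A * u)) := by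
      noncomm_ring
    rw [hexp, hqA, sub_self, sub_zero]
  · intro x hx1 hx2
    have hAx : A * x = 0 := by
      calc A * x = p * ((1 - q) * x) := by rw [hA, mul_assoc]
      _ = p * (x - q * x) := by congr 1; noncomm_ring
      _ = p * 0 := by rw [hx2, sub_self]
      _ = 0 := mul_zero p
    calc (A * u) * x = (u * S) * x := by rw [hAuSu, ← huS]
    _ = u * (S * x) := by rw [mul_assoc]
    _ = u * (A * (p * x)) := by rw [hS, mul_assoc]
    _ = u * (A * x) := by rw [hx1]
    _ = 0 := by rw [hAx, mul_zero]
  · intro y hy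
    calc (A * u) * y = (u * S) * y := by rw [hAuSu, ← huS]
    _ = u * (S * y) := by rw [mul_assoc]
    _ = u * (A * (p * y)) := by rw [hS, mul_assoc]
    _ = 0 := by rw [hy, mul_zero, mul_zero]
theorem stmt19 (p q u v : R) (hp : IsProj p) (hq : IsProj q)
    (h1 : ∃ c, IsMP (p * (1 - q)) c) (h2 : ∃ c, IsMP ((1 - p) * q) c)
    (hu : IsMP (p * (1 - q) * p) u) (hv : IsMP ((1 - p) * q * (1 - p)) v) :
    IsProj (1 - p * (1 - q) * u - (1 - p) * q * v) ∧
    rid (1 - p * (1 - q) * u - (1 - p) * q * v) =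
      sid (rid p ∩ rid q) (rid (1 - p) ∩ rid (1 - q)) ∧
    (∀ x ∈ rid p ∩ rid q, ∀ y ∈ rid (1 - p) ∩ rid (1 - q), star y * x = 0) := by
  obtain ⟨c, hc⟩ := h1
  obtain ⟨d, hd⟩ := h2
  have hp' : IsProj (1 - p) := by
    constructor
    · calc (1 - p) * (1 - p) = 1 - p - p + p * p := by noncomm_ring
      _ = 1 - p := by rw [hp.1]; abel
    · rw [star_sub, star_one, hp.2]
  have hq' : IsProj (1 - q) := by
    constructor
    · calc (1 - q) * (1 - q) = 1 - q - q + q * q := by noncomm_ring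
      _ = 1 - q := by rw [hq.1]; abel
    · rw [star_sub, star_one, hq.2]
  have hd' : IsMP ((1 - p) * (1 - (1 - q))) d := by rwa [sub_sub_cancel]
  have hv' : IsMP ((1 - p) * (1 - (1 - q)) * (1 - p)) v := by rwa [sub_sub_cancel]
  obtain ⟨G1a, G2a, G3a, G4a, G5a, G6a, G7a⟩ := aux hp hq hc hu
  have H := aux hp' hq' hd' hv'
  rw [sub_sub_cancel] at H
  obtain ⟨G1b, G2b, G3b, G4b, G5b, G6b, G7b⟩ := H
  set g₁ := p * (1 - q) * u with hg₁def
  set g₂ := (1 - p) * q * v with hg₂def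
  have h0 : p * (1 - p) = 0 := by rw [mul_sub, mul_one, hp.1, sub_self]
  have h0' : (1 - p) * p = 0 := by rw [sub_mul, one_mul, hp.1, sub_self]
  have hpg2 : p * g₂ = 0 := by
    calc p * g₂ = (p * (1 - p)) * g₂ := by rw [mul_assoc, G3b]
    _ = 0 := by rw [h0, zero_mul]
  have h1pg1 : (1 - p) * g₁ = 0 := by rw [sub_mul, one_mul, G3a, sub_self]
  have horth12 : g₁ * g₂ = 0 := by
    calc g₁ * g₂ = (g₁ * p) * ((1 - p) * g₂) := by rw [G4a, G3b]
    _ = g₁ * (p * (1 - p)) * g₂ := by noncomm_ring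
    _ = 0 := by rw [h0, mul_zero, zero_mul]
  have horth21 : g₂ * g₁ = 0 := by
    calc g₂ * g₁ = (g₂ * (1 - p)) * (p * g₁) := by rw [G4b, G3a]
    _ = g₂ * ((1 - p) * p) * g₁ := by noncomm_ring
    _ = 0 := by rw [h0', mul_zero, zero_mul]
  refine ⟨⟨?_, ?_⟩, ?_, ?_⟩
  · have expand : (1 - g₁ - g₂) * (1 - g₁ - g₂) =
        1 - g₁ - g₂ - g₁ + g₁ * g₁ + g₂ * g₁ - g₂ + g₁ * g₂ + g₂ * g₂ := by noncomm_ring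
    rw [expand, G1a, G1b, horth12, horth21]; abel
  · rw [star_sub, star_sub, star_one, G2a, G2b]
  · ext z
    constructor
    · rintro ⟨r, rfl⟩
      have hpe : p * (1 - g₁ - g₂) = p - g₁ := by
        calc p * (1 - g₁ - g₂) = p - p * g₁ - p * g₂ := by noncomm_ring
        _ = p - g₁ := by rw [G3a, hpg2, sub_zero]
      have h1pe : (1 - p) * (1 - g₁ - g₂) = (1 - p) - g₂ := by
        have : (1 - p) * (1 - g₁ - g₂) = (1 - p) - (1 - p) * g₁ - (1 - p) * g₂ := by noncomm_ring
        rw [this, h1pg1, G3b, sub_zero]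
      have hqx : q * (p * ((1 - g₁ - g₂) * r)) = p * ((1 - g₁ - g₂) * r) := by
        calc q * (p * ((1 - g₁ - g₂) * r)) = (q * (p * (1 - g₁ - g₂))) * r := by noncomm_ring
        _ = (q * (p - g₁)) * r := by rw [hpe]
        _ = (p - g₁) * r := by rw [G5a]
        _ = (p * (1 - g₁ - g₂)) * r := by rw [hpe]
        _ = p * ((1 - g₁ - g₂) * r) := by rw [mul_assoc]
      have hqy : (1 - q) * ((1 - p) * ((1 - g₁ - g₂) * r)) =
          (1 - p) * ((1 - g₁ - g₂) * r) := by
        calc (1 - q) * ((1 - p) * ((1 - g₁ - g₂) * r)) = ((1 - q) * ((1 - p) * (1 - g₁ - g₂))) * r := by noncomm_ring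
        _ = ((1 - q) * ((1 - p) - g₂)) * r := by rw [h1pe]
        _ = ((1 - p) - g₂) * r := by rw [G5b]
        _ = ((1 - p) * (1 - g₁ - g₂)) * r := by rw [h1pe]
        _ = (1 - p) * ((1 - g₁ - g₂) * r) := by rw [mul_assoc]
      refine ⟨p * ((1 - g₁ - g₂) * r), ⟨⟨(1 - g₁ - g₂) * r, rfl⟩, ⟨_, hqx.symm⟩⟩,
        (1 - p) * ((1 - g₁ - g₂) * r), ⟨⟨(1 - g₁ - g₂) * r, rfl⟩, ⟨_, hqy.symm⟩⟩, ?_⟩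
      noncomm_ring
    · rintro ⟨x, ⟨⟨r₁, hx1⟩, ⟨r₂, hx2⟩⟩, y, ⟨⟨r₃, hy3⟩, ⟨r₄, hy4⟩⟩, rfl⟩
      have hpx : p * x = x := by rw [hx1, ← mul_assoc, hp.1]
      have hqx : q * x = x := by rw [hx2, ← mul_assoc, hq.1]
      have hpy : (1 - p) * y = y := by rw [hy3, ← mul_assoc, hp'.1]
      have hqy : (1 - q) * y = y := by rw [hy4, ← mul_assoc, hq'.1]
      have hpy0 : p * y = 0 := by
        calc p * y = (p * (1 - p)) * y := by rw [mul_assoc, hpy]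
        _ = 0 := by rw [h0, zero_mul]
      have hpx0 : (1 - p) * x = 0 := by
        calc (1 - p) * x = ((1 - p) * p) * x := by rw [mul_assoc, hpx]
        _ = 0 := by rw [h0', zero_mul]
      have e1 : g₁ * x = 0 := G6a x hpx hqx
      have e2 : g₂ * x = 0 := G7b x hpx0
      have e3 : g₁ * y = 0 := G7a y hpy0
      have e4 : g₂ * y = 0 := G6b y hpy hqy
      refine ⟨x + y, ?_⟩
      calc x + y = x + y - g₁ * x - g₁ * y - g₂ * x - g₂ * y := by rw [e1, e2, e3, e4]; abel
      _ = (1 - g₁ - g₂) * (x + y) := by noncomm_ring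
  · rintro x ⟨⟨r₁, hx1⟩, -⟩ y ⟨⟨r₃, hy3⟩, -⟩
    rw [hx1, hy3, star_mul, hp'.2]
    calc (star r₃ * (1 - p)) * (p * r₁) = star r₃ * (((1 - p) * p) * r₁) := by noncomm_ring
    _ = 0 := by rw [h0', zero_mul, mul_zero]
end
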